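/- arXiv:math/0405316 — 11 statements merged into one kernel-verified Lean document; each statement's English description precedes it below -/
import Mathlib

section
/- For natural numbers n, k, l with k ≤ n, l ≤ n and k ≠ l, the alternative Legendre polynomials satisfy the orthogonality relation ∫₀¹ 𝒫_{n,k}(x) · 𝒫_{n,l}(x) dx = 0. -/
open Polynomial

/-- The alternative Legendre polynomial `𝒫_{n,k}`. -/
noncomputable def ALP (n k : ℕ) : Polynomial ℝ :=
  ∑ j ∈ Finset.range (n - k + 1),
    Polynomial.C ((-1 : ℝ) ^ j * ((n - k).choose j) * ((n + k + 1 + j).choose (n - k))) *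
      Polynomial.X ^ (k + j)

open Finset fwdDiff

lemma fwd_eval (p : Polynomial ℝ) :
    fwdDiff (1:ℝ) (fun y => p.eval y) = fun y => (p.comp (X + 1) - p).eval y := by
  funext y
  simp [fwdDiff, eval_comp]

lemma degree_comp_sub (p : Polynomial ℝ) (hp : p ≠ 0) :
    (p.comp (X + 1) - p).degree < p.degree := by
  have h1 : ((X + 1 : Polynomial ℝ)).natDegree = 1 := by
    simpa using natDegree_X_add_C (1:ℝ)
  have hlc : (p.comp (X + 1)).leadingCoeff = p.leadingCoeff := by
    rw [leadingCoeff_comp (by simp [h1])]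
    have : ((X + 1 : Polynomial ℝ)).leadingCoeff = 1 := by
      simpa using (monic_X_add_C (1:ℝ)).leadingCoeff
    simp [this]
  have hcne : p.comp (X + 1) ≠ 0 := by
    intro h0
    apply hp
    rw [← leadingCoeff_eq_zero, ← hlc, h0, leadingCoeff_zero]
  have hdeq : (p.comp (X + 1)).degree = p.degree := by
    rw [degree_eq_natDegree hcne, degree_eq_natDegree hp, natDegree_comp, h1, mul_one]
  have hfin := degree_sub_lt hdeq hcne hlc
  rwa [hdeq] at hfin

lemma fwd_iter_zero : ∀ (a : ℕ) (p : Polynomial ℝ), p.degree < a →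
    ∀ y : ℝ, (fwdDiff (1:ℝ))^[a] (fun x => p.eval x) y = 0 := by
  intro a
  induction a with
  | zero =>
    intro p hp y
    have : p = 0 := by
      rw [← degree_eq_bot]
      exact Nat.WithBot.lt_zero_iff.mp (by simpa using hp)
    simp [this]
  | succ a ih =>
    intro p hp y
    rcases eq_or_ne p 0 with rfl | hne
    · rw [Function.iterate_succ_apply]
      have hc : fwdDiff (1:ℝ) (fun x => eval x (0:Polynomial ℝ))
          = fun x => eval x (0:Polynomial ℝ) := by
        funext z; simp [fwdDiff]
      rw [hc]
      exact ih 0 (by rw [degree_zero]; exact WithBot.bot_lt_coe a) y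
    · rw [Function.iterate_succ_apply, fwd_eval]
      apply ih
      have h2 := degree_comp_sub p hne
      have h3 : p.degree ≤ (a : WithBot ℕ) := by
        rw [degree_eq_natDegree hne] at hp ⊢
        exact_mod_cast Nat.lt_succ_iff.mp (by exact_mod_cast hp)
      exact lt_of_lt_of_le h2 h3

lemma alt_sum_poly (a : ℕ) (p : Polynomial ℝ) (hp : p.degree < a) :
    ∑ j ∈ range (a+1), (-1:ℝ)^j * (a.choose j) * p.eval (j:ℝ) = 0 := by
  have h := fwdDiff_iter_eq_sum_shift (1:ℝ) (fun x => p.eval x) a 0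
  rw [fwd_iter_zero a p hp 0] at h
  have h0 : ∑ j ∈ range (a+1), (-1:ℝ)^(a-j) * (a.choose j) * p.eval (j:ℝ) = 0 := by
    have h2 : ∑ j ∈ range (a+1), (-1:ℝ)^(a-j) * (a.choose j) * p.eval (j:ℝ)
        = ∑ j ∈ range (a+1), ((-1:ℤ)^(a-j) * (a.choose j)) • p.eval ((0:ℝ) + j • (1:ℝ)) := by
      apply sum_congr rfl
      intro j _
      simp only [zsmul_eq_mul, nsmul_eq_mul, mul_one, zero_add]
      push_cast
      ring
    rw [h2]
    exact h.symm
  calc ∑ j ∈ range (a+1), (-1:ℝ)^j * (a.choose j) * p.eval (j:ℝ)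
      = ∑ j ∈ range (a+1), (-1:ℝ)^a * ((-1:ℝ)^(a-j) * (a.choose j) * p.eval (j:ℝ)) := by
        apply sum_congr rfl
        intro j hj
        have hj' : j ≤ a := Nat.lt_succ_iff.mp (mem_range.mp hj)
        have hpow : (-1:ℝ)^a * (-1:ℝ)^(a-j) = (-1:ℝ)^j := by
          rw [← pow_add, show a + (a - j) = j + 2*(a-j) by omega, pow_add, pow_mul]
          norm_num
        rw [← mul_assoc, ← mul_assoc, hpow]
    _ = (-1:ℝ)^a * ∑ j ∈ range (a+1), (-1:ℝ)^(a-j) * (a.choose j) * p.eval (j:ℝ) := by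
        rw [mul_sum]
    _ = 0 := by rw [h0, mul_zero]

lemma asc_prod (n : ℕ) : ∀ k : ℕ, n.ascFactorial k = ∏ i ∈ range k, (n + i)
  | 0 => by simp
  | k + 1 => by rw [Nat.ascFactorial_succ, prod_range_succ, mul_comm, asc_prod n k]

lemma key (n k m : ℕ) (hkm : k < m) (hm : m ≤ n) :
    ∑ j ∈ range (n-k+1),
      (-1:ℝ)^j * ((n-k).choose j) * ((n+k+1+j).choose (n-k)) / ((m:ℝ)+k+j+1) = 0 := by
  set a := n - k with ha
  have ha1 : 1 ≤ a := by omega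
  set i₀ := m - k - 1 with hi₀
  have hi₀a : i₀ ∈ range a := by simp only [mem_range]; omega
  set q : Polynomial ℝ := ∏ i ∈ (range a).erase i₀, (X + C ((2*k+2+i : ℕ) : ℝ)) with hq
  set p : Polynomial ℝ := C (1/(a.factorial : ℝ)) * q with hpdef
  have hfac : (a.factorial : ℝ) ≠ 0 := by positivity
  have hmon : ∀ i ∈ (range a).erase i₀, (X + C ((2*k+2+i : ℕ) : ℝ)).Monic := by
    intro i _; exact monic_X_add_C _
  have hqmon : q.Monic := monic_prod_of_monic _ _ hmon
  have hdeg : p.degree < (a : WithBot ℕ) := by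
    have hnd : q.natDegree = a - 1 := by
      rw [hq, natDegree_prod_of_monic _ _ hmon]
      simp only [natDegree_X_add_C]
      rw [sum_const, card_erase_of_mem hi₀a, smul_eq_mul, mul_one, card_range]
    rw [hpdef, degree_mul, degree_C (by positivity), zero_add,
      degree_eq_natDegree hqmon.ne_zero, hnd]
    exact_mod_cast show a - 1 < a by omega
  have hterm : ∀ j ∈ range (a+1),
      (((n+k+1+j).choose a : ℝ)) / ((m:ℝ)+k+j+1) = p.eval (j:ℝ) := by
    intro j _
    have hprod : ((2*k+2+j).ascFactorial a : ℝ) = ∏ i ∈ range a, ((j:ℝ) + (2*k+2+i : ℕ)) := by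
      rw [asc_prod]
      push_cast
      apply prod_congr rfl
      intro i _
      ring
    have hasc : (2*k+2+j).ascFactorial a = a.factorial * (n+k+1+j).choose a := by
      have h2 := Nat.ascFactorial_eq_factorial_mul_choose (2*k+1+j) a
      rw [show 2*k+1+j+1 = 2*k+2+j by ring] at h2
      rw [h2]
      congr 2
      omega
    have hsplit : ∏ i ∈ range a, ((j:ℝ) + (2*k+2+i : ℕ))
        = ((m:ℝ)+k+j+1) * q.eval (j:ℝ) := by
      rw [← Finset.mul_prod_erase _ _ hi₀a]
      congr 1
      · push_cast [show (2*k+2+i₀ : ℕ) = m+k+1 by omega]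
        ring
      · rw [hq, eval_prod]
        apply prod_congr rfl
        intro i _
        simp
    have h1 : (((n+k+1+j).choose a : ℝ)) * (a.factorial : ℝ)
        = ((m:ℝ)+k+j+1) * q.eval (j:ℝ) := by
      rw [← hsplit, ← hprod, hasc]
      push_cast
      ring
    have hne : ((m:ℝ)+k+j+1) ≠ 0 := by positivity
    rw [hpdef]
    simp only [eval_mul, eval_C]
    field_simp
    linarith [h1]
  have hz := alt_sum_poly a p hdeg
  rw [← hz]
  apply sum_congr rfl
  intro j hj
  rw [mul_div_assoc, hterm j hj]

lemma key' (n k l : ℕ) (hkl : k < l) (hl : l ≤ n) :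
    ∫ x in (0:ℝ)..1, (ALP n k).eval x * (ALP n l).eval x = 0 := by
  have h1 : ∀ x : ℝ, (ALP n k).eval x * (ALP n l).eval x
      = ∑ i ∈ range (n-l+1), ∑ j ∈ range (n-k+1),
          (((-1:ℝ)^i * ((n-l).choose i) * ((n+l+1+i).choose (n-l))) *
           ((-1:ℝ)^j * ((n-k).choose j) * ((n+k+1+j).choose (n-k)))) * x^((l+i)+(k+j)) := by
    intro x
    simp only [ALP, eval_finset_sum, eval_mul, eval_C, eval_pow, eval_X]
    rw [mul_comm, Finset.sum_mul_sum]
    apply sum_congr rfl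
    intro i _
    apply sum_congr rfl
    intro j _
    ring
  simp only [h1]
  rw [intervalIntegral.integral_finset_sum]
  swap
  · intro i _
    apply Continuous.intervalIntegrable
    exact continuous_finset_sum _ fun j _ => by continuity
  have h2 : ∀ i ∈ range (n-l+1),
      (∫ x in (0:ℝ)..1, ∑ j ∈ range (n-k+1),
          (((-1:ℝ)^i * ((n-l).choose i) * ((n+l+1+i).choose (n-l))) *
           ((-1:ℝ)^j * ((n-k).choose j) * ((n+k+1+j).choose (n-k)))) * x^((l+i)+(k+j)))
      = ((-1:ℝ)^i * ((n-l).choose i) * ((n+l+1+i).choose (n-l))) *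
          ∑ j ∈ range (n-k+1),
            (-1:ℝ)^j * ((n-k).choose j) * ((n+k+1+j).choose (n-k)) / (((l+i : ℕ):ℝ)+k+j+1) := by
    intro i _
    rw [intervalIntegral.integral_finset_sum]
    swap
    · intro j _
      apply Continuous.intervalIntegrable
      continuity
    rw [mul_sum]
    apply sum_congr rfl
    intro j _
    rw [intervalIntegral.integral_const_mul, integral_pow, one_pow,
      zero_pow (by omega : (l+i)+(k+j)+1 ≠ 0), sub_zero]
    push_cast
    ring
  rw [sum_congr rfl h2]
  apply sum_eq_zero
  intro i hi
  rw [key n k (l+i) (by omega) (by have := mem_range.mp hi; omega), mul_zero]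

/-- Orthogonality of the alternative Legendre polynomials. -/
theorem ALP_orthogonal (n k l : ℕ) (hk : k ≤ n) (hl : l ≤ n) (hkl : k ≠ l) :
    ∫ x in (0:ℝ)..1, (ALP n k).eval x * (ALP n l).eval x = 0 := by
  rcases lt_or_gt_of_ne hkl with h | h
  · exact key' n k l h hl
  · have := key' n l k h hk
    simpa [mul_comm] using this
end

section
/- For natural numbers n and k with k ≤ n, the alternative Legendre polynomial satisfies the normalization ∫₀¹ 𝒫_{n,k}(x)² dx = 1/(2k+1). -/
open Polynomial Finset
set_option maxHeartbeats 1600000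

/-- Alternating binomial sum with reciprocals (Beta integral identity). -/
lemma alt_sum_inv : ∀ (m : ℕ) (c : ℝ), 0 < c →
    ∑ j ∈ range (m+1), (-1:ℝ)^j * (m.choose j) / (c + j)
      = m.factorial / ∏ t ∈ range (m+1), (c + t) := by
  intro m
  induction m with
  | zero => intro c hc; simp
  | succ m ih =>
    intro c hc
    have hrec : ∑ j ∈ range (m+2), (-1:ℝ)^j * ((m+1).choose j) / (c + j)
        = (∑ j ∈ range (m+1), (-1:ℝ)^j * (m.choose j) / (c + j))
          - ∑ j ∈ range (m+1), (-1:ℝ)^j * (m.choose j) / ((c+1) + j) := by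
      have h1 : ∑ j ∈ range (m+2), (-1:ℝ)^j * ((m+1).choose j) / (c + j)
          = (∑ j ∈ range (m+1), (-1:ℝ)^(j+1) * ((m+1).choose (j+1)) / (c + (j+1))) + 1/c := by
        rw [Finset.sum_range_succ' (fun j => (-1:ℝ)^j * ((m+1).choose j) / (c + j))]
        simp
      have h2 : ∑ j ∈ range (m+2), (-1:ℝ)^j * (m.choose j) / (c + j)
          = ∑ j ∈ range (m+1), (-1:ℝ)^j * (m.choose j) / (c + j) := by
        rw [Finset.sum_range_succ]
        simp [Nat.choose_eq_zero_of_lt (Nat.lt_succ_self m)]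
      have h3 : ∑ j ∈ range (m+2), (-1:ℝ)^j * (m.choose j) / (c + j)
          = (∑ j ∈ range (m+1), (-1:ℝ)^(j+1) * (m.choose (j+1)) / (c + (j+1))) + 1/c := by
        rw [Finset.sum_range_succ' (fun j => (-1:ℝ)^j * (m.choose j) / (c + j))]
        simp
      rw [h1]
      have : ∀ j ∈ range (m+1), (-1:ℝ)^(j+1) * ((m+1).choose (j+1)) / (c + (j+1))
          = (-1:ℝ)^(j+1) * (m.choose j) / (c + (j+1))
            + (-1:ℝ)^(j+1) * (m.choose (j+1)) / (c + (j+1)) := by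
        intro j _
        rw [Nat.choose_succ_succ]
        push_cast
        ring
      rw [Finset.sum_congr rfl this, Finset.sum_add_distrib]
      have h4 : ∑ j ∈ range (m+1), (-1:ℝ)^(j+1) * (m.choose j) / (c + (j+1))
          = - ∑ j ∈ range (m+1), (-1:ℝ)^j * (m.choose j) / ((c+1) + j) := by
        rw [← Finset.sum_neg_distrib]
        apply Finset.sum_congr rfl
        intro j _
        have : c + (↑j + 1) = (c + 1) + j := by ring
        rw [this]
        ring
      have h5 : ∑ j ∈ range (m+1), (-1:ℝ)^(j+1) * (m.choose (j+1)) / (c + (j+1))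
          = (∑ j ∈ range (m+1), (-1:ℝ)^j * (m.choose j) / (c + j)) - 1/c := by
        have := h3.symm
        rw [h2] at this
        linarith [this]
      rw [h4, h5]
      ring
    rw [hrec, ih c hc, ih (c+1) (by linarith)]
    have hp1 : ∏ t ∈ range (m+1), (c + t) ≠ 0 := by
      apply Finset.prod_ne_zero_iff.mpr
      intro t _
      positivity
    have hp2 : ∏ t ∈ range (m+1), ((c+1) + t) ≠ 0 := by
      apply Finset.prod_ne_zero_iff.mpr
      intro t _
      positivity
    have e1 : ∏ t ∈ range (m+2), (c + t) = c * ∏ t ∈ range (m+1), ((c+1) + t) := by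
      rw [Finset.prod_range_succ' (fun t => c + (t:ℝ))]
      simp only [Nat.cast_zero, add_zero, mul_comm]
      congr 1
      apply Finset.prod_congr rfl
      intro t _
      push_cast; ring
    have e2 : ∏ t ∈ range (m+2), (c + t) = (c + (m+1)) * ∏ t ∈ range (m+1), (c + t) := by
      rw [Finset.prod_range_succ]
      push_cast; ring
    have hp3 : ∏ t ∈ range (m+2), (c + t) ≠ 0 := by
      apply Finset.prod_ne_zero_iff.mpr
      intro t _
      positivity
    rw [div_sub_div _ _ hp1 hp2]
    rw [div_eq_div_iff (by exact mul_ne_zero hp1 hp2) hp3]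
    have e3 : c * ∏ t ∈ range (m+1), ((c+1) + t)
        = (c + (↑m+1)) * ∏ t ∈ range (m+1), (c + t) := by
      rw [← e1, e2]
    rw [e1]
    push_cast [Nat.factorial_succ]
    linear_combination ((m.factorial : ℝ) * ∏ t ∈ range (m+1), ((c+1) + t)) * e3

lemma alt_sum_choose_real {n : ℕ} (hn : n ≠ 0) :
    ∑ j ∈ range (n+1), (-1:ℝ)^j * (n.choose j) = 0 := by
  have h := Int.alternating_sum_range_choose_of_ne hn
  have := congrArg (fun z : ℤ => (z : ℝ)) h
  push_cast at this
  simpa using this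

lemma alt_sum_choose_choose {m v : ℕ} (hv : v < m) :
    ∑ j ∈ range (m+1), (-1:ℝ)^j * (m.choose j) * (j.choose v) = 0 := by
  have hsub : Finset.Ico v (m+1) ⊆ range (m+1) := by
    intro x hx
    simp only [Finset.mem_Ico] at hx
    simp [hx.2]
  have h0 : ∑ j ∈ range (m+1), (-1:ℝ)^j * (m.choose j) * (j.choose v)
      = ∑ j ∈ Finset.Ico v (m+1), (-1:ℝ)^j * (m.choose j) * (j.choose v) := by
    refine (Finset.sum_subset hsub ?_).symm
    intro x _ hx
    simp only [Finset.mem_Ico, not_and, not_lt] at hx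
    by_cases hxv : x < v
    · simp [Nat.choose_eq_zero_of_lt hxv]
    · exfalso
      exact absurd (by simpa using Finset.mem_range.mp ‹x ∈ range (m+1)›) (by omega)
  rw [h0, Finset.sum_Ico_eq_sum_range]
  have hlen : m + 1 - v = (m - v) + 1 := by omega
  rw [hlen]
  have hterm : ∀ j ∈ range ((m-v)+1),
      (-1:ℝ)^(v+j) * (m.choose (v+j)) * ((v+j).choose v)
        = ((-1:ℝ)^v * (m.choose v)) * ((-1:ℝ)^j * ((m-v).choose j)) := by
    intro j hj
    have hj' : j ≤ m - v := by
      have := Finset.mem_range.mp hj; omega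
    have hkn : v + j ≤ m := by omega
    have hmul := Nat.choose_mul (n := m) (k := v+j) (s := v) (Nat.le_add_right v j)
    have : (m.choose (v+j) : ℝ) * ((v+j).choose v) = (m.choose v) * ((m-v).choose j) := by
      have := congrArg (fun z : ℕ => (z : ℝ)) hmul
      push_cast at this
      simpa [Nat.add_sub_cancel_left] using this
    rw [pow_add]
    linear_combination ((-1:ℝ)^v * (-1:ℝ)^j) * this
  rw [Finset.sum_congr rfl hterm, ← Finset.mul_sum]
  rw [alt_sum_choose_real (by omega : m - v ≠ 0)]
  ring

lemma alt_sum_kill (m d e : ℕ) (hd : d < m) :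
    ∑ j ∈ range (m+1), (-1:ℝ)^j * (m.choose j) * ((e+j).choose d) = 0 := by
  have hVan : ∀ j : ℕ, ((e+j).choose d : ℝ)
      = ∑ u ∈ range (d+1), (e.choose u : ℝ) * (j.choose (d-u)) := by
    intro j
    have := Nat.add_choose_eq e j d
    have h2 := congrArg (fun z : ℕ => (z : ℝ)) this
    push_cast at h2
    rw [h2, Finset.Nat.sum_antidiagonal_eq_sum_range_succ_mk]
  have step1 : ∑ j ∈ range (m+1), (-1:ℝ)^j * (m.choose j) * ((e+j).choose d)
      = ∑ j ∈ range (m+1), ∑ u ∈ range (d+1),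
          (e.choose u : ℝ) * ((-1:ℝ)^j * (m.choose j) * (j.choose (d-u))) := by
    apply Finset.sum_congr rfl
    intro j _
    rw [hVan j, Finset.mul_sum]
    apply Finset.sum_congr rfl
    intro u _
    ring
  rw [step1, Finset.sum_comm]
  apply Finset.sum_eq_zero
  intro u hu
  rw [← Finset.mul_sum, alt_sum_choose_choose (by omega : d - u < m)]
  ring

lemma key_sum (m c b : ℕ) (hc : 1 ≤ c)
    (alt_sum_inv : ∑ j ∈ range (m+1), (-1:ℝ)^j * (m.choose j) / ((c:ℝ) + j)
      = m.factorial / ∏ t ∈ range (m+1), ((c:ℝ) + t))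
    (alt_sum_kill : ∀ d e : ℕ, d < m →
      ∑ j ∈ range (m+1), (-1:ℝ)^j * (m.choose j) * ((e+j).choose d) = 0) :
    ∑ j ∈ range (m+1), (-1:ℝ)^j * (m.choose j) * ((c+b+j).choose m) / ((c:ℝ)+j)
      = ((b.choose m : ℝ) * m.factorial) / ∏ t ∈ range (m+1), ((c:ℝ) + t) := by
  have hVan : ∀ j : ℕ, (((c+b+j).choose m : ℝ))
      = ∑ u ∈ range (m+1), ((c+j).choose u : ℝ) * (b.choose (m-u)) := by
    intro j
    have h1 : c+b+j = (c+j)+b := by omega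
    rw [h1]
    have h2 := congrArg (fun z : ℕ => (z:ℝ)) (Nat.add_choose_eq (c+j) b m)
    push_cast at h2
    rw [h2, Finset.Nat.sum_antidiagonal_eq_sum_range_succ_mk]
  have step1 : ∑ j ∈ range (m+1), (-1:ℝ)^j * (m.choose j) * ((c+b+j).choose m) / ((c:ℝ)+j)
      = ∑ j ∈ range (m+1), ∑ u ∈ range (m+1),
          (b.choose (m-u) : ℝ) * ((-1:ℝ)^j * (m.choose j) * ((c+j).choose u) / ((c:ℝ)+j)) := by
    apply Finset.sum_congr rfl
    intro j _
    rw [hVan j, Finset.mul_sum, Finset.sum_div]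
    apply Finset.sum_congr rfl
    intro u _
    ring
  rw [step1, Finset.sum_comm,
    Finset.sum_range_succ' (fun u => ∑ j ∈ range (m+1),
      (b.choose (m-u) : ℝ) * ((-1:ℝ)^j * (m.choose j) * ((c+j).choose u) / ((c:ℝ)+j)))]
  have hzero : ∑ u ∈ range m, ∑ j ∈ range (m+1),
      (b.choose (m-(u+1)) : ℝ) * ((-1:ℝ)^j * (m.choose j) * ((c+j).choose (u+1)) / ((c:ℝ)+j))
      = 0 := by
    apply Finset.sum_eq_zero
    intro u hu
    have hum : u < m := Finset.mem_range.mp hu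
    have hterm : ∀ j ∈ range (m+1),
        (b.choose (m-(u+1)) : ℝ) * ((-1:ℝ)^j * (m.choose j) * ((c+j).choose (u+1)) / ((c:ℝ)+j))
          = ((b.choose (m-(u+1)) : ℝ) / (u+1)) *
              ((-1:ℝ)^j * (m.choose j) * (((c-1)+j).choose u)) := by
      intro j _
      have hnat : (c+j) * (((c-1)+j).choose u) = ((c+j).choose (u+1)) * (u+1) := by
        have h := Nat.add_one_mul_choose_eq ((c-1)+j) u
        have hsucc : (c-1)+j+1 = c+j := by omega
        rwa [hsucc] at h
      have hcast := congrArg (fun z : ℕ => (z:ℝ)) hnat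
      push_cast at hcast
      have hcj : ((c:ℝ)+j) ≠ 0 := by positivity
      have hu1 : ((u:ℝ)+1) ≠ 0 := by positivity
      have hdiv : ((c+j).choose (u+1) : ℝ) / ((c:ℝ)+j) = (((c-1)+j).choose u : ℝ) / ((u:ℝ)+1) := by
        rw [div_eq_div_iff hcj hu1]
        linarith [hcast]
      rw [mul_div_assoc, hdiv]
      ring
    rw [Finset.sum_congr rfl hterm, ← Finset.mul_sum, alt_sum_kill u (c-1) hum]
    ring
  rw [hzero, zero_add]
  have hu0 : ∀ j ∈ range (m+1),
      (b.choose (m-0) : ℝ) * ((-1:ℝ)^j * (m.choose j) * ((c+j).choose 0) / ((c:ℝ)+j))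
        = (b.choose m : ℝ) * ((-1:ℝ)^j * (m.choose j) / ((c:ℝ)+j)) := by
    intro j _
    simp
  rw [Finset.sum_congr rfl hu0, ← Finset.mul_sum, alt_sum_inv]
  ring

/-- Normalization of the alternative Legendre polynomials. -/
theorem ALP_norm (n k : ℕ) (hk : k ≤ n) :
    ∫ x in (0:ℝ)..1, (ALP n k).eval x ^ 2 = 1 / (2 * (k : ℝ) + 1) := by
  set m := n - k with hm
  set a : ℕ → ℝ := fun j => (-1:ℝ)^j * (m.choose j) * ((m+2*k+1+j).choose m) with ha
  have hALP : ∀ x : ℝ, (ALP n k).eval x = ∑ j ∈ range (m+1), a j * x^(k+j) := by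
    intro x
    unfold ALP
    rw [Polynomial.eval_finset_sum]
    apply Finset.sum_congr rfl
    intro j _
    have h1 : n + k + 1 + j = m + 2*k + 1 + j := by omega
    rw [h1]
    simp [ha, ← hm]
  have hsq : ∀ x : ℝ, (ALP n k).eval x ^ 2
      = ∑ i ∈ range (m+1), ∑ j ∈ range (m+1), (a i * a j) * x^((k+i)+(k+j)) := by
    intro x
    rw [hALP x, sq, Finset.sum_mul_sum]
    apply Finset.sum_congr rfl
    intro i _
    apply Finset.sum_congr rfl
    intro j _
    rw [pow_add]
    ring
  have hint : ∫ x in (0:ℝ)..1, (ALP n k).eval x ^ 2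
      = ∑ i ∈ range (m+1), ∑ j ∈ range (m+1), (a i * a j) / ((2*k+1+i : ℝ) + j) := by
    rw [intervalIntegral.integral_congr (g := fun x =>
      ∑ i ∈ range (m+1), ∑ j ∈ range (m+1), (a i * a j) * x^((k+i)+(k+j)))
      (fun x _ => hsq x)]
    have hInt1 : ∀ i ∈ range (m+1), IntervalIntegrable
        (fun x : ℝ => ∑ j ∈ range (m+1), (a i * a j) * x^((k+i)+(k+j)))
        MeasureTheory.volume 0 1 := by
      intro i _
      exact (continuous_finset_sum _ (fun j _ =>
        continuous_const.mul (continuous_pow _))).intervalIntegrable _ _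
    rw [intervalIntegral.integral_finset_sum hInt1]
    apply Finset.sum_congr rfl
    intro i _
    rw [intervalIntegral.integral_finset_sum (f := fun j (x : ℝ) => (a i * a j) * x^((k+i)+(k+j))) (fun j _ =>
      ((continuous_const.mul (continuous_pow _)).intervalIntegrable _ _ :
        IntervalIntegrable (fun x : ℝ => (a i * a j) * x^((k+i)+(k+j))) MeasureTheory.volume 0 1))]
    apply Finset.sum_congr rfl
    intro j _
    rw [intervalIntegral.integral_const_mul, integral_pow]
    have hden : ((2*k+1+i : ℝ) + j) = (((k+i)+(k+j) : ℕ) : ℝ) + 1 := by push_cast; ring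
    rw [hden]
    norm_num
    exact (div_eq_mul_inv _ _).symm
  rw [hint]
  -- inner sum via key_sum
  have hinner : ∀ i ∈ range (m+1),
      ∑ j ∈ range (m+1), a i * a j / (2*(k:ℝ)+1+i+j)
        = a i * ((((m-i).choose m : ℝ) * m.factorial)
            / ∏ t ∈ range (m+1), (((2*k+1+i : ℕ) : ℝ) + t)) := by
    intro i hi
    have him : i ≤ m := by have := Finset.mem_range.mp hi; omega
    have hks := key_sum m (2*k+1+i) (m-i) (by omega)
      (alt_sum_inv m ((2*k+1+i : ℕ) : ℝ) (by positivity))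
      (fun d e hd => alt_sum_kill m d e hd)
    have hidx : ∀ j : ℕ, (2*k+1+i) + (m-i) + j = m+2*k+1+j := by omega
    have hL : ∀ j ∈ range (m+1),
        (-1:ℝ)^j * (m.choose j) * (((2*k+1+i)+(m-i)+j).choose m) / (((2*k+1+i : ℕ):ℝ)+j)
          = a j / (2*(k:ℝ)+1+i+j) := by
      intro j _
      rw [hidx j]
      have : ((2*k+1+i : ℕ) : ℝ) = 2*(k:ℝ)+1+i := by push_cast; ring
      rw [this, ha]
    rw [Finset.sum_congr rfl hL] at hks
    calc ∑ j ∈ range (m+1), a i * a j / (2*(k:ℝ)+1+i+j)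
        = a i * ∑ j ∈ range (m+1), a j / (2*(k:ℝ)+1+i+j) := by
          rw [Finset.mul_sum]
          exact Finset.sum_congr rfl (fun j _ => by rw [mul_div_assoc])
      _ = _ := by rw [hks]
  rw [Finset.sum_congr rfl hinner]
  -- only i = 0 survives
  rw [Finset.sum_eq_single_of_mem 0 (Finset.mem_range.mpr (Nat.succ_pos m))
    (fun i hi hne => by
      have him : i ≤ m := by have := Finset.mem_range.mp hi; omega
      have : (m - i).choose m = 0 := Nat.choose_eq_zero_of_lt (by omega)
      rw [this]
      simp)]
  have ha0 : a 0 = ((m+2*k+1).choose m : ℝ) := by simp [ha]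
  rw [ha0, Nat.sub_zero, Nat.choose_self]
  -- final arithmetic
  have h2 : (∏ t ∈ range (m+1), (2*k+1+t)) * (2*k).factorial = (m+2*k+1).factorial := by
    induction m with
    | zero => simp [Nat.factorial_succ]
    | succ m ihm =>
      rw [Finset.prod_range_succ]
      calc (∏ t ∈ range (m+1), (2*k+1+t)) * (2*k+1+(m+1)) * (2*k).factorial
          = (2*k+1+(m+1)) * ((∏ t ∈ range (m+1), (2*k+1+t)) * (2*k).factorial) := by ring
        _ = (2*k+1+(m+1)) * (m+2*k+1).factorial := by rw [ihm]
        _ = (m+1+2*k+1).factorial := by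
            rw [show 2*k+1+(m+1) = m+2*k+1+1 from by omega,
              show m+1+2*k+1 = (m+2*k+1)+1 from by omega, Nat.factorial_succ (m+2*k+1)]
  have h1 : ((m+2*k+1).choose m) * m.factorial * ((2*k+1) * (2*k).factorial)
      = (m+2*k+1).factorial := by
    have := Nat.choose_mul_factorial_mul_factorial (show m ≤ m+2*k+1 by omega)
    have hsub : m+2*k+1 - m = 2*k+1 := by omega
    rw [hsub] at this
    rw [← this, Nat.factorial_succ]
  have hEq : ((m+2*k+1).choose m) * m.factorial * (2*k+1)
      = ∏ t ∈ range (m+1), (2*k+1+t) := by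
    have hpos : 0 < (2*k).factorial := Nat.factorial_pos _
    apply Nat.eq_of_mul_eq_mul_right hpos
    rw [h2, ← h1]
    ring
  have hcast := congrArg (fun z : ℕ => (z : ℝ)) hEq
  push_cast at hcast
  have hPpos : (0:ℝ) < ∏ t ∈ range (m+1), (((2*k+1+0 : ℕ) : ℝ) + t) := by
    apply Finset.prod_pos
    intro t _
    positivity
  have hPc : ∏ t ∈ range (m+1), (((2*k+1+0 : ℕ) : ℝ) + t)
      = ∏ t ∈ range (m+1), ((2*(k:ℝ)+1) + t) := by
    apply Finset.prod_congr rfl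
    intro t _
    push_cast; ring
  rw [hPc] at hPpos ⊢
  have hPne := ne_of_gt hPpos
  push_cast
  field_simp
  linear_combination hcast
end

section
/- For natural numbers n and k with k ≤ n, the following Rodrigues-type identity holds as an identity of real polynomials: (n−k)! · x^{k+1} · 𝒫_{n,k}(x) = d^{n−k}/dx^{n−k} [ x^{n+k+1} (1−x)^{n−k} ]. -/
open Polynomial

/-- Rodrigues-type representation of the alternative Legendre polynomials. -/
theorem ALP_rodrigues (n k : ℕ) (hk : k ≤ n) :
    Polynomial.C ((n - k).factorial : ℝ) * Polynomial.X ^ (k + 1) * ALP n k =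
      Polynomial.derivative^[n - k]
        (Polynomial.X ^ (n + k + 1) * (1 - Polynomial.X) ^ (n - k)) := by
  set m := n - k with hm
  rw [sub_eq_neg_add, add_pow, Finset.mul_sum, ALP, Finset.mul_sum,
    Polynomial.iterate_derivative_sum]
  refine Finset.sum_congr rfl fun j hj => ?_
  rw [Finset.mem_range] at hj
  have h1 : (X : ℝ[X]) ^ (n + k + 1) * ((-X) ^ j * 1 ^ (m - j) * (m.choose j : ℝ[X])) =
      C ((-1 : ℝ) ^ j * (m.choose j : ℝ)) * X ^ (n + k + 1 + j) := by
    have hneg : (-X : ℝ[X]) ^ j = C ((-1 : ℝ) ^ j) * X ^ j := by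
      rw [neg_eq_neg_one_mul, mul_pow, ← C_1, ← C_neg, ← C_pow]
    rw [hneg, one_pow, mul_one, ← Polynomial.C_eq_natCast, C_mul, pow_add]
    ring
  rw [h1, Polynomial.iterate_derivative_C_mul,
    Polynomial.iterate_derivative_X_pow_eq_C_mul]
  have h2 : n + k + 1 + j - m = 2 * k + 1 + j := by omega
  have h3 : ((n + k + 1 + j).descFactorial m : ℝ) =
      (m.factorial : ℝ) * ((n + k + 1 + j).choose m : ℝ) := by
    rw [Nat.descFactorial_eq_factorial_mul_choose]; push_cast; ring
  rw [h2, h3, ← hm]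
  have key : ∀ a b : ℝ, C a * X ^ (k + 1) * (C b * X ^ (k + j)) =
      C (a * b) * X ^ (2 * k + 1 + j) := by
    intro a b
    have h4 : 2 * k + 1 + j = k + 1 + (k + j) := by omega
    rw [C_mul, h4, pow_add]; ring
  rw [key]
  simp only [← mul_assoc, ← C_mul]
  congr 1
  ring
end

section
/- For natural numbers n and k with k ≤ n, the alternative Legendre polynomial satisfies ∫₀¹ 𝒫_{n,k}(x) dx = 1/(n+1). -/
open Polynomial

open Finset

lemma pascal_split (M : ℕ) (f : ℕ → ℝ) :
    ∑ j ∈ range (M + 2), (-1 : ℝ) ^ j * ((M + 1).choose j) * f j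
      = ∑ j ∈ range (M + 1), (-1 : ℝ) ^ j * (M.choose j) * f j
        - ∑ j ∈ range (M + 1), (-1 : ℝ) ^ j * (M.choose j) * f (j + 1) := by
  have h1 : ∑ j ∈ range (M + 2), (-1 : ℝ) ^ j * (M.choose j) * f j
      = ∑ j ∈ range (M + 1), (-1 : ℝ) ^ j * (M.choose j) * f j := by
    rw [Finset.sum_range_succ]; simp
  rw [← h1, Finset.sum_range_succ' (fun j => (-1 : ℝ) ^ j * ((M + 1).choose j) * f j) (M + 1),
    Finset.sum_range_succ' (fun j => (-1 : ℝ) ^ j * (M.choose j) * f j) (M + 1)]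
  simp only [Nat.choose_succ_succ, Nat.succ_eq_add_one, Nat.cast_add, pow_succ,
    Nat.choose_zero_right, Nat.cast_one, pow_zero, one_mul]
  have key : ∀ x, (-1 : ℝ) ^ x * -1 * ((M.choose x : ℝ) + (M.choose (x + 1))) * f (x + 1)
      = (-1 : ℝ) ^ x * -1 * (M.choose (x + 1)) * f (x + 1)
        - (-1 : ℝ) ^ x * (M.choose x) * f (x + 1) := by intro x; ring
  simp only [key, Finset.sum_sub_distrib]
  ring

lemma alt_sum_choose_zero (m : ℕ) (hm : 0 < m) :
    ∑ j ∈ range (m + 1), (-1 : ℝ) ^ j * (m.choose j) = 0 := by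
  have h := add_pow (-1 : ℝ) 1 m
  simp only [one_pow, mul_one, neg_add_cancel, zero_pow hm.ne'] at h
  rw [← h]
  -- closed

lemma kill (r : ℕ) : ∀ m a : ℕ, r < m →
    ∑ j ∈ range (m + 1), (-1 : ℝ) ^ j * (m.choose j) * ((a + j).choose r) = 0 := by
  induction r with
  | zero =>
    intro m a hm
    simp only [Nat.choose_zero_right, Nat.cast_one, mul_one]
    exact alt_sum_choose_zero m hm
  | succ r ih =>
    intro m a hm
    obtain ⟨M, rfl⟩ : ∃ M, m = M + 1 := ⟨m - 1, by omega⟩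
    rw [show M + 1 + 1 = M + 2 from rfl,
      pascal_split M (fun j => ((a + j).choose (r + 1) : ℝ))]
    have h : ∀ j : ℕ, ((a + (j + 1)).choose (r + 1) : ℝ)
        = ((a + j).choose r : ℝ) + ((a + j).choose (r + 1) : ℝ) := by
      intro j
      rw [show a + (j + 1) = (a + j) + 1 from rfl, Nat.choose_succ_succ' ]
      push_cast; ring
    simp only [h]
    have split : ∑ j ∈ range (M + 1), (-1 : ℝ) ^ j * (M.choose j) *
        (((a + j).choose r : ℝ) + ((a + j).choose (r + 1) : ℝ))
        = ∑ j ∈ range (M + 1), (-1 : ℝ) ^ j * (M.choose j) * ((a + j).choose r : ℝ)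
          + ∑ j ∈ range (M + 1), (-1 : ℝ) ^ j * (M.choose j) * ((a + j).choose (r + 1) : ℝ) := by
      rw [← Finset.sum_add_distrib]
      exact Finset.sum_congr rfl (fun j _ => by ring)
    rw [split, ih M a (by omega)]
    ring

lemma beta_sum (m : ℕ) : ∀ c : ℕ,
    ∑ j ∈ range (m + 1), (-1 : ℝ) ^ j * (m.choose j) * ((c : ℝ) + 1 + j)⁻¹
      = (m.factorial : ℝ) * (c.factorial : ℝ) / ((m + c + 1).factorial : ℝ) := by
  induction m with
  | zero =>
    intro c
    have h1 : ((c : ℝ) + 1) ≠ 0 := by positivity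
    have h2 : ((c.factorial : ℕ) : ℝ) ≠ 0 := Nat.cast_ne_zero.mpr (Nat.factorial_ne_zero _)
    simp only [Finset.sum_range_one, pow_zero, Nat.choose_self, Nat.cast_one, Nat.cast_zero,
      one_mul, add_zero, Nat.factorial_succ, Nat.factorial_zero, zero_add]
    push_cast
    field_simp
  | succ M ih =>
    intro c
    rw [show M + 1 + 1 = M + 2 from rfl,
      pascal_split M (fun j => ((c : ℝ) + 1 + j)⁻¹)]
    have h : ∀ j : ℕ, ((c : ℝ) + 1 + ((j + 1 : ℕ) : ℝ))⁻¹ = (((c + 1 : ℕ) : ℝ) + 1 + j)⁻¹ := by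
      intro j; push_cast; ring_nf
    simp only [h]
    rw [ih c, ih (c + 1)]
    have e1 : (M + (c + 1) + 1).factorial = (M + c + 2) * (M + c + 1).factorial := by
      rw [show M + (c + 1) + 1 = (M + c + 1) + 1 by ring, Nat.factorial_succ]
    have e2 : (c + 1).factorial = (c + 1) * c.factorial := Nat.factorial_succ c
    have e3 : (M + 1).factorial = (M + 1) * M.factorial := Nat.factorial_succ M
    have e4 : (M + 1 + c + 1).factorial = (M + c + 2) * (M + c + 1).factorial := by
      rw [show M + 1 + c + 1 = (M + c + 1) + 1 by ring, Nat.factorial_succ]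
    rw [e1, e2, e3, e4]
    have h2 : ((c.factorial : ℕ) : ℝ) ≠ 0 := Nat.cast_ne_zero.mpr (Nat.factorial_ne_zero _)
    have h3 : (((M + c + 1).factorial : ℕ) : ℝ) ≠ 0 := Nat.cast_ne_zero.mpr (Nat.factorial_ne_zero _)
    have h4 : ((M : ℝ) + c + 2) ≠ 0 := by positivity
    push_cast
    field_simp
    ring

lemma key_sum_s3 (m k : ℕ) :
    ∑ j ∈ range (m + 1), (-1 : ℝ) ^ j * (m.choose j) * ((k + m + k + 1 + j).choose m)
        * ((k : ℝ) + 1 + j)⁻¹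
      = ((m : ℝ) + k + 1)⁻¹ := by
  have expand : ∀ j : ℕ, ((k + m + k + 1 + j).choose m : ℝ)
      = ∑ i ∈ range (m + 1), ((m + k).choose i : ℝ) * (((k + 1 + j).choose (m - i)) : ℝ) := by
    intro j
    have h := Nat.add_choose_eq (m + k) (k + 1 + j) m
    rw [show m + k + (k + 1 + j) = k + m + k + 1 + j by ring] at h
    rw [h, Finset.Nat.sum_antidiagonal_eq_sum_range_succ_mk]
    push_cast
    rfl
  have step1 : ∑ j ∈ range (m + 1), (-1 : ℝ) ^ j * (m.choose j) * ((k + m + k + 1 + j).choose m)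
        * ((k : ℝ) + 1 + j)⁻¹
      = ∑ i ∈ range (m + 1), ∑ j ∈ range (m + 1),
          (-1 : ℝ) ^ j * (m.choose j) * (((m + k).choose i : ℝ) * ((k + 1 + j).choose (m - i)))
            * ((k : ℝ) + 1 + j)⁻¹ := by
    rw [Finset.sum_comm]
    refine Finset.sum_congr rfl fun j _ => ?_
    rw [expand j, Finset.mul_sum, Finset.sum_mul]
  rw [step1, Finset.sum_range_succ]
  have hz : ∀ i ∈ range m, ∑ j ∈ range (m + 1),
      (-1 : ℝ) ^ j * (m.choose j) * (((m + k).choose i : ℝ) * ((k + 1 + j).choose (m - i)))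
        * ((k : ℝ) + 1 + j)⁻¹ = 0 := by
    intro i hi
    have him : i < m := Finset.mem_range.mp hi
    obtain ⟨t, ht⟩ : ∃ t, m - i = t + 1 := ⟨m - i - 1, by omega⟩
    have trans : ∀ j ∈ range (m + 1),
        (-1 : ℝ) ^ j * (m.choose j) * (((m + k).choose i : ℝ) * ((k + 1 + j).choose (m - i)))
          * ((k : ℝ) + 1 + j)⁻¹
        = ((-1 : ℝ) ^ j * (m.choose j) * ((k + j).choose t))
            * (((m + k).choose i : ℝ) * ((t : ℝ) + 1)⁻¹) := by
      intro j _
      have hcr : ((k + 1 + j).choose (t + 1)) * (t + 1) = (k + 1 + j) * ((k + j).choose t) := by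
        rw [show k + 1 + j = (k + j) + 1 by omega]
        exact (Nat.add_one_mul_choose_eq (k + j) t).symm
      have hcr' := congrArg (Nat.cast : ℕ → ℝ) hcr
      push_cast at hcr'
      have hinv : (((k + 1 + j).choose (m - i) : ℕ) : ℝ) * ((k : ℝ) + 1 + j)⁻¹
          = (((k + j).choose t : ℕ) : ℝ) * ((t : ℝ) + 1)⁻¹ := by
        have hk0 : ((k : ℝ) + 1 + j) ≠ 0 := by positivity
        have ht0 : ((t : ℝ) + 1) ≠ 0 := by positivity
        rw [ht]
        field_simp
        linear_combination hcr'
      calc (-1 : ℝ) ^ j * (m.choose j) * (((m + k).choose i : ℝ) * ((k + 1 + j).choose (m - i)))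
            * ((k : ℝ) + 1 + j)⁻¹
          = ((-1 : ℝ) ^ j * (m.choose j) * ((m + k).choose i : ℝ))
              * ((((k + 1 + j).choose (m - i) : ℕ) : ℝ) * ((k : ℝ) + 1 + j)⁻¹) := by ring
        _ = ((-1 : ℝ) ^ j * (m.choose j) * ((m + k).choose i : ℝ))
              * ((((k + j).choose t : ℕ) : ℝ) * ((t : ℝ) + 1)⁻¹) := by rw [hinv]
        _ = ((-1 : ℝ) ^ j * (m.choose j) * ((k + j).choose t))
              * (((m + k).choose i : ℝ) * ((t : ℝ) + 1)⁻¹) := by ring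
    rw [Finset.sum_congr rfl trans, ← Finset.sum_mul, kill t m k (by omega), zero_mul]
  rw [Finset.sum_eq_zero hz, zero_add]
  have last : ∑ j ∈ range (m + 1),
      (-1 : ℝ) ^ j * (m.choose j) * (((m + k).choose m : ℝ) * ((k + 1 + j).choose (m - m)))
        * ((k : ℝ) + 1 + j)⁻¹
      = ((m + k).choose m : ℝ) * ∑ j ∈ range (m + 1),
          (-1 : ℝ) ^ j * (m.choose j) * ((k : ℝ) + 1 + j)⁻¹ := by
    rw [Finset.mul_sum]
    refine Finset.sum_congr rfl fun j _ => ?_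
    simp only [Nat.sub_self, Nat.choose_zero_right, Nat.cast_one]
    ring
  rw [last, beta_sum m k]
  have hfac : ((m + k).choose m : ℝ) * ((m.factorial : ℝ) * (k.factorial : ℝ))
      = ((m + k).factorial : ℝ) := by
    have := Nat.choose_mul_factorial_mul_factorial (Nat.le_add_right m k)
    rw [Nat.add_sub_cancel_left] at this
    push_cast [← this]
    ring
  have e1 : (m + k + 1).factorial = (m + k + 1) * (m + k).factorial := Nat.factorial_succ _
  have h1 : (((m + k).factorial : ℕ) : ℝ) ≠ 0 := Nat.cast_ne_zero.mpr (Nat.factorial_ne_zero _)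
  have h2 : ((m : ℝ) + k + 1) ≠ 0 := by positivity
  rw [e1]
  push_cast
  field_simp
  linear_combination hfac

/-- The integral of an alternative Legendre polynomial over [0,1] is 1/(n+1). -/
theorem ALP_integral (n k : ℕ) (hk : k ≤ n) :
    ∫ x in (0:ℝ)..1, (ALP n k).eval x = 1 / ((n : ℝ) + 1) := by
  obtain ⟨m, rfl⟩ : ∃ m, n = k + m := ⟨n - k, by omega⟩
  have hmk : k + m - k = m := by omega
  have heval : ∀ x : ℝ, (ALP (k + m) k).eval x
      = ∑ j ∈ range (m + 1),
          (-1 : ℝ) ^ j * (m.choose j) * ((k + m + k + 1 + j).choose m) * x ^ (k + j) := by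
    intro x
    simp [ALP, hmk, eval_finset_sum]
  have hint : ∀ j : ℕ, IntervalIntegrable
      (fun x : ℝ => (-1 : ℝ) ^ j * (m.choose j) * ((k + m + k + 1 + j).choose m) * x ^ (k + j))
      MeasureTheory.volume 0 1 := by
    intro j
    exact ((continuous_const.mul (continuous_pow _))).intervalIntegrable 0 1
  calc ∫ x in (0:ℝ)..1, (ALP (k + m) k).eval x
      = ∫ x in (0:ℝ)..1, ∑ j ∈ range (m + 1),
          (-1 : ℝ) ^ j * (m.choose j) * ((k + m + k + 1 + j).choose m) * x ^ (k + j) := by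
        simp only [heval]
    _ = ∑ j ∈ range (m + 1), ∫ x in (0:ℝ)..1,
          (-1 : ℝ) ^ j * (m.choose j) * ((k + m + k + 1 + j).choose m) * x ^ (k + j) := by
        exact intervalIntegral.integral_finset_sum (fun j _ => hint j)
    _ = ∑ j ∈ range (m + 1),
          (-1 : ℝ) ^ j * (m.choose j) * ((k + m + k + 1 + j).choose m) * ((k : ℝ) + 1 + j)⁻¹ := by
        refine Finset.sum_congr rfl fun j _ => ?_
        rw [intervalIntegral.integral_const_mul, integral_pow]
        push_cast
        ring
    _ = ((m : ℝ) + k + 1)⁻¹ := key_sum_s3 m k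
    _ = 1 / (((k + m : ℕ) : ℝ) + 1) := by
        rw [one_div]
        push_cast
        ring_nf
end

section
/- For natural numbers n and k with 1 ≤ k ≤ n−1, the alternative Legendre polynomials satisfy the three-term recurrence (as an identity of real polynomials, with the relation of the paper multiplied through by x): (k+1)(n−k+1)(n+k+1) · x · 𝒫_{n,k−1}(x) = ( k(2k+1)(2k+2) − (2k+1)((n+1)² + k² + k)·x ) · 𝒫_{n,k}(x) − k(n−k)(n+k+2) · x · 𝒫_{n,k+1}(x). -/
open Polynomial

lemma ALP_coeff (n k m : ℕ) (h : k ≤ n) :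
    (ALP n k).coeff m =
      if k ≤ m ∧ m ≤ n then
        (-1 : ℝ) ^ (m - k) * ((n - k).choose (m - k)) * ((n + m + 1).choose (n - k))
      else 0 := by
  rw [ALP, Polynomial.finset_sum_coeff]
  simp only [Polynomial.coeff_C_mul, Polynomial.coeff_X_pow, mul_ite, mul_one, mul_zero]
  split_ifs with h2
  · rw [Finset.sum_eq_single (m - k)]
    · rw [if_pos (by omega)]
      have : n + k + 1 + (m - k) = n + m + 1 := by omega
      rw [this]
    · intro j hj hne
      rw [if_neg (by simp at hj; omega)]
    · intro hj
      simp at hj; omega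
  · apply Finset.sum_eq_zero
    intro j hj
    simp at hj
    rw [if_neg (by omega)]

lemma fact_ne (x : ℕ) : ((x.factorial : ℕ) : ℝ) ≠ 0 := by
  exact_mod_cast Nat.factorial_ne_zero x

lemma fact_step (a b : ℕ) (h : a = b + 1) :
    ((a.factorial : ℕ) : ℝ) = ((b : ℝ) + 1) * (b.factorial : ℝ) := by
  subst h; rw [Nat.factorial_succ]; push_cast; ring

lemma c1 (K d : ℕ) :
    ((K:ℝ)+2)*((d:ℝ)+2)*(2*(K:ℝ)+(d:ℝ)+4) * (((2*K+d+3).choose (d+2) : ℕ) : ℝ)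
      = ((K:ℝ)+1)*(2*(K:ℝ)+3)*(2*(K:ℝ)+4) * (((2*K+d+4).choose (d+1) : ℕ) : ℝ) := by
  rw [Nat.cast_choose ℝ (show d+2 ≤ 2*K+d+3 by omega),
      Nat.cast_choose ℝ (show d+1 ≤ 2*K+d+4 by omega),
      show 2*K+d+3 - (d+2) = 2*K+1 by omega,
      show 2*K+d+4 - (d+1) = 2*K+3 by omega,
      fact_step (2*K+d+4) (2*K+d+3) (by ring),
      fact_step (d+2) (d+1) (by ring),
      fact_step (2*K+3) (2*K+2) (by ring),
      fact_step (2*K+2) (2*K+1) (by ring)]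
  have h1 := fact_ne (2*K+d+3)
  have h2 := fact_ne (d+1)
  have h3 := fact_ne (2*K+1)
  field_simp
  push_cast
  ring

lemma c2 (K d : ℕ) :
    -(((K:ℝ)+2)*((d:ℝ)+2)*(2*(K:ℝ)+(d:ℝ)+4)) * ((d:ℝ)+2) * (((2*K+d+4).choose (d+2) : ℕ) : ℝ)
      = -(((K:ℝ)+1)*(2*(K:ℝ)+3)*(2*(K:ℝ)+4)) * ((d:ℝ)+1) * (((2*K+d+5).choose (d+1) : ℕ) : ℝ)
        - (2*(K:ℝ)+3)*(((K:ℝ)+(d:ℝ)+3)^2+((K:ℝ)+1)^2+((K:ℝ)+1)) *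
            (((2*K+d+4).choose (d+1) : ℕ) : ℝ) := by
  rw [Nat.cast_choose ℝ (show d+2 ≤ 2*K+d+4 by omega),
      Nat.cast_choose ℝ (show d+1 ≤ 2*K+d+5 by omega),
      Nat.cast_choose ℝ (show d+1 ≤ 2*K+d+4 by omega),
      show 2*K+d+4 - (d+2) = 2*K+2 by omega,
      show 2*K+d+5 - (d+1) = 2*K+4 by omega,
      show 2*K+d+4 - (d+1) = 2*K+3 by omega,
      fact_step (2*K+d+5) (2*K+d+4) (by ring),
      fact_step (d+2) (d+1) (by ring),
      fact_step (2*K+4) (2*K+3) (by ring),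
      fact_step (2*K+3) (2*K+2) (by ring)]
  have h1 := fact_ne (2*K+d+4)
  have h2 := fact_ne (d+1)
  have h3 := fact_ne (2*K+2)
  field_simp
  push_cast
  ring

lemma c4 (K d : ℕ) :
    ((K:ℝ)+2)*((d:ℝ)+2)*(2*(K:ℝ)+(d:ℝ)+4) * (((2*K+2*d+5).choose (d+2) : ℕ) : ℝ)
      = (2*(K:ℝ)+3)*(((K:ℝ)+(d:ℝ)+3)^2+((K:ℝ)+1)^2+((K:ℝ)+1)) *
            (((2*K+2*d+5).choose (d+1) : ℕ) : ℝ)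
        - ((K:ℝ)+1)*((d:ℝ)+1)*(2*(K:ℝ)+(d:ℝ)+5) * (((2*K+2*d+5).choose d : ℕ) : ℝ) := by
  rw [Nat.cast_choose ℝ (show d+2 ≤ 2*K+2*d+5 by omega),
      Nat.cast_choose ℝ (show d+1 ≤ 2*K+2*d+5 by omega),
      Nat.cast_choose ℝ (show d ≤ 2*K+2*d+5 by omega),
      show 2*K+2*d+5 - (d+2) = 2*K+d+3 by omega,
      show 2*K+2*d+5 - (d+1) = 2*K+d+4 by omega,
      show 2*K+2*d+5 - d = 2*K+d+5 by omega,
      fact_step (d+2) (d+1) (by ring),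
      fact_step (d+1) d (by ring),
      fact_step (2*K+d+5) (2*K+d+4) (by ring),
      fact_step (2*K+d+4) (2*K+d+3) (by ring)]
  have h1 := fact_ne (2*K+2*d+5)
  have h2 := fact_ne d
  have h3 := fact_ne (2*K+d+3)
  field_simp
  push_cast
  ring

lemma cgen (K u e : ℕ) :
    ((K:ℝ)+2)*((u:ℝ)+(e:ℝ)+3)*(2*(K:ℝ)+(u:ℝ)+(e:ℝ)+5) *
        (((u+e+3).choose (u+2) : ℕ) : ℝ) * (((2*K+2*u+e+6).choose (u+e+3) : ℕ) : ℝ)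
      = ((K:ℝ)+1)*(2*(K:ℝ)+3)*(2*(K:ℝ)+4) *
          (((u+e+2).choose (u+2) : ℕ) : ℝ) * (((2*K+2*u+e+7).choose (u+e+2) : ℕ) : ℝ)
        + (2*(K:ℝ)+3)*(((K:ℝ)+(u:ℝ)+(e:ℝ)+4)^2+((K:ℝ)+1)^2+((K:ℝ)+1)) *
          (((u+e+2).choose (u+1) : ℕ) : ℝ) * (((2*K+2*u+e+6).choose (u+e+2) : ℕ) : ℝ)
        - ((K:ℝ)+1)*((u:ℝ)+(e:ℝ)+2)*(2*(K:ℝ)+(u:ℝ)+(e:ℝ)+6) *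
          (((u+e+1).choose u : ℕ) : ℝ) * (((2*K+2*u+e+6).choose (u+e+1) : ℕ) : ℝ) := by
  rw [Nat.cast_choose ℝ (show u+2 ≤ u+e+3 by omega),
      Nat.cast_choose ℝ (show u+2 ≤ u+e+2 by omega),
      Nat.cast_choose ℝ (show u+1 ≤ u+e+2 by omega),
      Nat.cast_choose ℝ (show u ≤ u+e+1 by omega),
      Nat.cast_choose ℝ (show u+e+3 ≤ 2*K+2*u+e+6 by omega),
      Nat.cast_choose ℝ (show u+e+2 ≤ 2*K+2*u+e+7 by omega),
      Nat.cast_choose ℝ (show u+e+2 ≤ 2*K+2*u+e+6 by omega),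
      Nat.cast_choose ℝ (show u+e+1 ≤ 2*K+2*u+e+6 by omega),
      show u+e+3 - (u+2) = e+1 by omega,
      show u+e+2 - (u+2) = e by omega,
      show u+e+2 - (u+1) = e+1 by omega,
      show u+e+1 - u = e+1 by omega,
      show 2*K+2*u+e+6 - (u+e+3) = 2*K+u+3 by omega,
      show 2*K+2*u+e+7 - (u+e+2) = 2*K+u+5 by omega,
      show 2*K+2*u+e+6 - (u+e+2) = 2*K+u+4 by omega,
      show 2*K+2*u+e+6 - (u+e+1) = 2*K+u+5 by omega,
      fact_step (u+e+3) (u+e+2) (by ring),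
      fact_step (u+e+2) (u+e+1) (by ring),
      fact_step (u+2) (u+1) (by ring),
      fact_step (u+1) u (by ring),
      fact_step (e+1) e (by ring),
      fact_step (2*K+2*u+e+7) (2*K+2*u+e+6) (by ring),
      fact_step (2*K+u+5) (2*K+u+4) (by ring),
      fact_step (2*K+u+4) (2*K+u+3) (by ring)]
  have h1 := fact_ne (u+e+1)
  have h2 := fact_ne u
  have h3 := fact_ne e
  have h4 := fact_ne (2*K+2*u+e+6)
  have h5 := fact_ne (2*K+u+3)
  field_simp
  push_cast
  ring

/-- Three-term recurrence for the alternative Legendre polynomials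
(the relation of the paper multiplied through by x). -/
theorem ALP_recurrence (n k : ℕ) (hk : 1 ≤ k) (hkn : k + 1 ≤ n) :
    Polynomial.C (((k : ℝ) + 1) * ((n : ℝ) - k + 1) * ((n : ℝ) + k + 1)) *
        Polynomial.X * ALP n (k - 1) =
      (Polynomial.C ((k : ℝ) * (2 * k + 1) * (2 * k + 2)) -
          Polynomial.C ((2 * (k : ℝ) + 1) * (((n : ℝ) + 1) ^ 2 + k ^ 2 + k)) * Polynomial.X) *
        ALP n k -
      Polynomial.C ((k : ℝ) * ((n : ℝ) - k) * ((n : ℝ) + k + 2)) * Polynomial.X *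
        ALP n (k + 1) := by
  obtain ⟨K, hkK⟩ : ∃ K, k = K + 1 := ⟨k - 1, by omega⟩
  obtain ⟨d, hn⟩ : ∃ d, n = K + d + 2 := ⟨n - (K + 2), by omega⟩
  ext M
  rcases M with _ | t
  · simp [Polynomial.mul_coeff_zero, ALP_coeff n k 0 (by omega), show ¬ (k ≤ 0) by omega]
  · simp only [mul_assoc, sub_mul, Polynomial.coeff_sub, Polynomial.coeff_C_mul,
      Polynomial.coeff_X_mul]
    rw [ALP_coeff n (k-1) t (by omega), ALP_coeff n k (t+1) (by omega),
        ALP_coeff n k t (by omega), ALP_coeff n (k+1) t (by omega)]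
    split_ifs with h1 h2 h3 h4 <;> try (exfalso; omega)
    -- generic branch: h1 h2 h3 h4 all true
    · obtain ⟨u, rfl⟩ : ∃ u, t = K + 2 + u := ⟨t - (K + 2), by omega⟩
      obtain ⟨e, rfl⟩ : ∃ e, d = u + 1 + e := ⟨d - (u + 1), by omega⟩
      rw [show K + 2 + u - (k - 1) = u + 2 from by omega,
          show n - (k - 1) = u + e + 3 from by omega,
          show n + (K + 2 + u) + 1 = 2*K+2*u+e+6 from by omega,
          show K + 2 + u + 1 - k = u + 2 from by omega,
          show n - k = u + e + 2 from by omega,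
          show n + (K + 2 + u + 1) + 1 = 2*K+2*u+e+7 from by omega,
          show K + 2 + u - k = u + 1 from by omega,
          show K + 2 + u - (k + 1) = u from by omega,
          show n - (k + 1) = u + e + 1 from by omega,
          hkK, hn]
      push_cast
      linear_combination ((-1 : ℝ)) ^ u * cgen K u e
    -- t = k : case 2
    · obtain rfl : t = K + 1 := by omega
      rw [show K + 1 - (k - 1) = 1 from by omega,
          show n - (k - 1) = d + 2 from by omega,
          show n + (K + 1) + 1 = 2*K+d+4 from by omega,
          show K + 1 + 1 - k = 1 from by omega,
          show n - k = d + 1 from by omega,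
          show n + (K + 1 + 1) + 1 = 2*K+d+5 from by omega,
          show K + 1 - k = 0 from by omega,
          hkK, hn]
      simp only [Nat.choose_one_right, Nat.choose_zero_right, pow_zero, pow_one, Nat.cast_one,
        one_mul, mul_one, mul_zero, sub_zero]
      push_cast
      linear_combination c2 K d
    -- t = k - 1 : case 1
    · have hKt : K = t := by omega
      subst hKt
      rw [show K - (k - 1) = 0 from by omega,
          show n - (k - 1) = d + 2 from by omega,
          show n + K + 1 = 2*K+d+3 from by omega,
          show K + 1 - k = 0 from by omega,
          show n - k = d + 1 from by omega,
          show n + (K + 1) + 1 = 2*K+d+4 from by omega,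
          hkK, hn]
      simp only [Nat.choose_zero_right, pow_zero, Nat.cast_one, one_mul, mul_one, mul_zero,
        sub_zero]
      push_cast
      linear_combination c1 K d
    -- t = n : case 4
    · obtain rfl : t = K + d + 2 := by omega
      rw [show K + d + 2 - (k - 1) = d + 2 from by omega,
          show n - (k - 1) = d + 2 from by omega,
          show n + (K + d + 2) + 1 = 2*K+2*d+5 from by omega,
          show K + d + 2 - k = d + 1 from by omega,
          show n - k = d + 1 from by omega,
          show K + d + 2 - (k + 1) = d from by omega,
          show n - (k + 1) = d from by omega,
          hkK, hn]
      simp only [Nat.choose_self, Nat.cast_one, mul_one, mul_zero, zero_sub, one_mul]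
      push_cast
      linear_combination ((-1 : ℝ)) ^ d * c4 K d
    -- all out of range
    · ring
end

section
/- For natural numbers n and k with k ≤ n−1, the alternative Legendre polynomials satisfy the differentiation formula (as an identity of real polynomials): 2(k+1) · x(1−x) · 𝒫'_{n,k}(x) = ( 2k(k+1) − (n² + k² + 2n)·x ) · 𝒫_{n,k}(x) − (n−k)(n+k+2) · x · 𝒫_{n,k+1}(x). -/
open Polynomial

lemma ALP_coeff_add (n k m : ℕ) :
    (ALP n k).coeff (k + m) =
      (-1 : ℝ) ^ m * ((n - k).choose m) * ((n + k + 1 + m).choose (n - k)) := by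
  unfold ALP
  rw [Polynomial.finset_sum_coeff]
  simp only [Polynomial.coeff_C_mul, Polynomial.coeff_X_pow, Nat.add_right_cancel_iff,
    add_right_inj, mul_ite, mul_one, mul_zero]
  rw [Finset.sum_ite_eq]
  by_cases h : m ≤ n - k
  · rw [if_pos (Finset.mem_range.mpr (by omega))]
  · rw [if_neg (by simp [Finset.mem_range]; omega),
      Nat.choose_eq_zero_of_lt (by omega : n - k < m)]
    simp

lemma ALP_coeff_lt (n k i : ℕ) (h : i < k) : (ALP n k).coeff i = 0 := by
  unfold ALP
  rw [Polynomial.finset_sum_coeff]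
  apply Finset.sum_eq_zero
  intro j _
  rw [Polynomial.coeff_C_mul, Polynomial.coeff_X_pow, if_neg (by omega), mul_zero]

lemma coeff_X_mul_derivative (p : Polynomial ℝ) (i : ℕ) :
    (Polynomial.X * Polynomial.derivative p).coeff i = p.coeff i * (i : ℝ) := by
  cases i with
  | zero => simp
  | succ j =>
      rw [Polynomial.coeff_X_mul, Polynomial.coeff_derivative]
      push_cast
      ring

/-- First differentiation formula for the alternative Legendre polynomials. -/
theorem ALP_deriv_up (n k : ℕ) (hkn : k + 1 ≤ n) :
    Polynomial.C (2 * ((k : ℝ) + 1)) * (Polynomial.X * (1 - Polynomial.X)) *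
        Polynomial.derivative (ALP n k) =
      (Polynomial.C (2 * (k : ℝ) * (k + 1)) -
          Polynomial.C ((n : ℝ) ^ 2 + (k : ℝ) ^ 2 + 2 * n) * Polynomial.X) * ALP n k -
      Polynomial.C (((n : ℝ) - k) * ((n : ℝ) + k + 2)) * Polynomial.X * ALP n (k + 1) := by
  rw [show Polynomial.C (2 * ((k : ℝ) + 1)) * (Polynomial.X * (1 - Polynomial.X)) *
        Polynomial.derivative (ALP n k)
      = Polynomial.C (2 * ((k : ℝ) + 1)) * (Polynomial.X * Polynomial.derivative (ALP n k))
        - Polynomial.C (2 * ((k : ℝ) + 1)) *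
            (Polynomial.X * (Polynomial.X * Polynomial.derivative (ALP n k))) from by ring,
    show (Polynomial.C (2 * (k : ℝ) * (k + 1)) -
          Polynomial.C ((n : ℝ) ^ 2 + (k : ℝ) ^ 2 + 2 * n) * Polynomial.X) * ALP n k -
        Polynomial.C (((n : ℝ) - k) * ((n : ℝ) + k + 2)) * Polynomial.X * ALP n (k + 1)
      = Polynomial.C (2 * (k : ℝ) * (k + 1)) * ALP n k
        - Polynomial.C ((n : ℝ) ^ 2 + (k : ℝ) ^ 2 + 2 * n) * (Polynomial.X * ALP n k)
        - Polynomial.C (((n : ℝ) - k) * ((n : ℝ) + k + 2)) *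
            (Polynomial.X * ALP n (k + 1)) from by ring]
  ext i
  simp only [Polynomial.coeff_sub, Polynomial.coeff_C_mul]
  cases i with
  | zero =>
      simp only [Polynomial.mul_coeff_zero, Polynomial.coeff_X_zero, zero_mul, mul_zero,
        sub_zero]
      rcases Nat.eq_zero_or_pos k with hk | hk
      · subst hk; push_cast; ring
      · rw [ALP_coeff_lt n k 0 hk]; ring
  | succ j =>
      simp only [Polynomial.coeff_X_mul]
      rw [coeff_X_mul_derivative, Polynomial.coeff_derivative]
      rcases lt_trichotomy (j + 1) k with h | h | h
      · rw [ALP_coeff_lt n k (j + 1) h, ALP_coeff_lt n k j (by omega),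
          ALP_coeff_lt n (k + 1) j (by omega)]
        ring
      · -- j + 1 = k
        subst h
        have h1 := ALP_coeff_add n (j + 1) 0
        rw [show (j : ℕ) + 1 + 0 = j + 1 from rfl] at h1
        rw [h1, ALP_coeff_lt n (j + 1) j (by omega),
          ALP_coeff_lt n (j + 1 + 1) j (by omega)]
        push_cast
        ring
      · -- k ≤ j : write j = k + m
        obtain ⟨m, rfl⟩ : ∃ m, j = k + m := ⟨j - k, by omega⟩
        rw [show k + m + 1 = k + (m + 1) from rfl, ALP_coeff_add n k (m + 1),
          ALP_coeff_add n k m]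
        cases m with
        | zero =>
            rw [ALP_coeff_lt n (k + 1) (k + 0) (by omega)]
            obtain ⟨d, rfl⟩ : ∃ d, n = k + 1 + d := ⟨n - (k + 1), by omega⟩
            rw [show k + 1 + d - k = d + 1 from by omega,
              show k + 1 + d + k + 1 + (0 + 1) = 2 * k + d + 3 from by omega,
              show k + 1 + d + k + 1 + 0 = 2 * k + d + 2 from by omega,
              Nat.choose_one_right]
            have e : ((2 * k + d + 2).choose (d + 1) : ℝ) * (2 * k + d + 3)
                = ((2 * k + d + 3).choose (d + 1) : ℝ) * (2 * k + 2) := by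
              have := Nat.choose_mul_succ_eq (2 * k + d + 2) (d + 1)
              rw [show 2 * k + d + 2 + 1 = 2 * k + d + 3 from by omega,
                show 2 * k + d + 3 - (d + 1) = 2 * k + 2 from by omega] at this
              exact_mod_cast this
            set V : ℝ := ((2 * k + d + 2).choose (d + 1) : ℝ)
            set Z : ℝ := ((2 * k + d + 3).choose (d + 1) : ℝ)
            have hZ : Z = V * (2 * k + d + 3) / (2 * k + 2) := by
              rw [eq_div_iff (by positivity)]; linarith [e]
            rw [hZ]
            field_simp
            push_cast [Nat.choose_zero_right]
            ring
        | succ m' =>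
            rw [show k + (m' + 1) = (k + 1) + m' from by omega, ALP_coeff_add n (k + 1) m']
            by_cases hm : m' + 1 ≤ n - k
            · obtain ⟨d, hd⟩ : ∃ d, n = k + m' + 1 + d := ⟨n - k - m' - 1, by omega⟩
              subst hd
              rw [show k + m' + 1 + d - k = m' + 1 + d from by omega,
                show k + m' + 1 + d - (k + 1) = m' + d from by omega,
                show k + m' + 1 + d + k + 1 + (m' + 1 + 1) = 2 * k + 2 * m' + d + 4
                  from by omega,
                show k + m' + 1 + d + k + 1 + (m' + 1) = 2 * k + 2 * m' + d + 3
                  from by omega,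
                show k + m' + 1 + d + (k + 1) + 1 + m' = 2 * k + 2 * m' + d + 3
                  from by omega]
              set U : ℝ := (((m' + 1 + d).choose (m' + 1) : ℕ) : ℝ) with hU
              set V : ℝ := (((2 * k + 2 * m' + d + 3).choose (m' + 1 + d) : ℕ) : ℝ) with hV
              set W : ℝ := (((m' + 1 + d).choose (m' + 1 + 1) : ℕ) : ℝ) with hW0
              set Z : ℝ := (((2 * k + 2 * m' + d + 4).choose (m' + 1 + d) : ℕ) : ℝ) with hZ0
              set R : ℝ := (((m' + d).choose m' : ℕ) : ℝ) with hR0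
              set Y : ℝ := (((2 * k + 2 * m' + d + 3).choose (m' + d) : ℕ) : ℝ) with hY0
              have e1 : W * ((m' : ℝ) + 2) = U * d := by
                have h := Nat.choose_succ_right_eq (m' + 1 + d) (m' + 1)
                rw [show m' + 1 + d - (m' + 1) = d from by omega] at h
                rw [hW0, hU]
                exact_mod_cast h
              have e2 : V * (2 * (k : ℝ) + 2 * m' + d + 4) = Z * (2 * k + m' + 3) := by
                have h := Nat.choose_mul_succ_eq (2 * k + 2 * m' + d + 3) (m' + 1 + d)
                rw [show 2 * k + 2 * m' + d + 3 + 1 = 2 * k + 2 * m' + d + 4 from by omega,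
                  show 2 * k + 2 * m' + d + 4 - (m' + 1 + d) = 2 * k + m' + 3 from by omega]
                  at h
                rw [hV, hZ0]
                exact_mod_cast h
              have e3 : ((m' : ℝ) + 1 + d) * R = U * (m' + 1) := by
                have h := Nat.add_one_mul_choose_eq (m' + d) m'
                rw [
                  show m' + d + 1 = m' + 1 + d from by omega] at h
                rw [hR0, hU]
                exact_mod_cast h
              have e4 : V * ((m' : ℝ) + 1 + d) = Y * (2 * k + m' + 3) := by
                have h := Nat.choose_succ_right_eq (2 * k + 2 * m' + d + 3) (m' + d)
                rw [show m' + d + 1 = m' + 1 + d from by omega,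
                  show 2 * k + 2 * m' + d + 3 - (m' + d) = 2 * k + m' + 3 from by omega] at h
                rw [hV, hY0]
                exact_mod_cast h
              have hW : W = U * d / ((m' : ℝ) + 2) := by
                rw [eq_div_iff (by positivity)]; linarith [e1]
              have hZ : Z = V * (2 * (k : ℝ) + 2 * m' + d + 4) / (2 * k + m' + 3) := by
                rw [eq_div_iff (by positivity)]; linarith [e2]
              have hR : R = U * ((m' : ℝ) + 1) / ((m' : ℝ) + 1 + d) := by
                rw [eq_div_iff (by positivity)]; linarith [e3]
              have hY : Y = V * ((m' : ℝ) + 1 + d) / (2 * (k : ℝ) + m' + 3) := by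
                rw [eq_div_iff (by positivity)]; linarith [e4]
              rw [hW, hZ, hR, hY]
              push_cast
              field_simp
              ring
            · rw [Nat.choose_eq_zero_of_lt (show n - k < m' + 1 + 1 from by omega),
                Nat.choose_eq_zero_of_lt (show n - k < m' + 1 from by omega),
                Nat.choose_eq_zero_of_lt (show n - (k + 1) < m' from by omega)]
              push_cast
              ring
end

section
/- For natural numbers n and k with k ≤ n, the polynomial ζ(x) = x · 𝒫_{n,k}(x) satisfies the differential equation x²(1−x)·ζ''(x) − x²·ζ'(x) + ((n+1)²·x − k(k+1))·ζ(x) = 0, as an identity of real polynomials. -/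
open Polynomial

private lemma ALP_key_term (n k : ℕ) (a : ℝ) (t : ℕ) :
    (X : ℝ[X]) ^ 2 * (1 - X) * derivative (derivative (C a * X ^ (t + 1))) -
      X ^ 2 * derivative (C a * X ^ (t + 1)) +
      (C (((n : ℝ) + 1) ^ 2) * X - C ((k : ℝ) * ((k : ℝ) + 1))) * (C a * X ^ (t + 1)) =
    C (a * ((((t : ℕ) : ℝ) + 1) * ((t : ℕ) : ℝ) - (k : ℝ) * ((k : ℝ) + 1))) * X ^ (t + 1) +
      C (a * (((n : ℝ) + 1) ^ 2 - (((t : ℕ) : ℝ) + 1) ^ 2)) * X ^ (t + 1 + 1) := by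
  cases t with
  | zero =>
      simp only [derivative_C_mul, derivative_X_pow]
      push_cast
      simp only [map_mul, map_sub, map_add, map_pow, map_one, map_zero]
      ring
  | succ s =>
      simp only [derivative_C_mul, derivative_X_pow]
      push_cast
      simp only [map_mul, map_sub, map_add, map_pow, map_one, map_zero, Nat.add_sub_cancel]
      ring

private lemma ALP_scalar (n k j : ℕ) (hk : k ≤ n) (hj : j < n - k) :
    (-1 : ℝ) ^ (j + 1) * ((n - k).choose (j + 1)) * ((n + k + 1 + (j + 1)).choose (n - k)) *
        (((k : ℝ) + (j + 1) + 1) * ((k : ℝ) + (j + 1)) - (k : ℝ) * ((k : ℝ) + 1)) +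
      (-1 : ℝ) ^ j * ((n - k).choose j) * ((n + k + 1 + j).choose (n - k)) *
        (((n : ℝ) + 1) ^ 2 - ((k : ℝ) + j + 1) ^ 2) = 0 := by
  have natid : (n - k).choose (j + 1) * (j + 1) *
        ((n + k + 1 + (j + 1)).choose (n - k) * (2 * k + j + 2))
      = (n - k).choose j * (n - k - j) *
        ((n + k + 1 + j).choose (n - k) * (n + k + 1 + j + 1)) := by
    rw [Nat.choose_succ_right_eq]
    rw [show n + k + 1 + (j + 1) = (n + k + 1 + j) + 1 by omega]
    rw [show 2 * k + j + 2 = (n + k + 1 + j) + 1 - (n - k) by omega]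
    rw [← Nat.choose_mul_succ_eq]
  have hjk : j ≤ n - k := le_of_lt hj
  have hcast : ((n - k).choose (j + 1) : ℝ) * ((j : ℝ) + 1) *
        (((n + k + 1 + (j + 1)).choose (n - k) : ℝ) * (2 * (k : ℝ) + j + 2))
      = ((n - k).choose j : ℝ) * ((n : ℝ) - k - j) *
        (((n + k + 1 + j).choose (n - k) : ℝ) * ((n : ℝ) + k + 1 + j + 1)) := by
    have := congrArg (Nat.cast : ℕ → ℝ) natid
    push_cast [Nat.cast_sub hjk, Nat.cast_sub hk] at this
    linarith [this]
  rw [pow_succ]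
  linear_combination -((-1 : ℝ) ^ j) * hcast

/-- x·𝒫_{n,k}(x) solves the differential equation
x²(1−x)ζ'' − x²ζ' + ((n+1)²x − k(k+1))ζ = 0. -/
theorem ALP_ode (n k : ℕ) (hk : k ≤ n) :
    Polynomial.X ^ 2 * (1 - Polynomial.X) *
        Polynomial.derivative (Polynomial.derivative (Polynomial.X * ALP n k)) -
      Polynomial.X ^ 2 * Polynomial.derivative (Polynomial.X * ALP n k) +
      (Polynomial.C (((n : ℝ) + 1) ^ 2) * Polynomial.X -
          Polynomial.C ((k : ℝ) * (k + 1))) * (Polynomial.X * ALP n k) = 0 := by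
  have hz : Polynomial.X * ALP n k = ∑ j ∈ Finset.range (n - k + 1),
      C ((-1 : ℝ) ^ j * ((n - k).choose j) * ((n + k + 1 + j).choose (n - k))) * X ^ (k + j + 1) := by
    unfold ALP
    rw [Finset.mul_sum]
    exact Finset.sum_congr rfl fun j _ => by ring
  rw [hz]
  simp only [derivative_sum, Finset.mul_sum, ← Finset.sum_sub_distrib, ← Finset.sum_add_distrib]
  rw [Finset.sum_congr rfl (fun j _ =>
    ALP_key_term n k ((-1 : ℝ) ^ j * ((n - k).choose j) * ((n + k + 1 + j).choose (n - k))) (k + j))]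
  rw [Finset.sum_add_distrib]
  rw [Finset.sum_range_succ' (fun j => C (((-1 : ℝ) ^ j * ((n - k).choose j) *
      ((n + k + 1 + j).choose (n - k))) * ((((k + j : ℕ) : ℝ) + 1) * ((k + j : ℕ) : ℝ) -
      (k : ℝ) * ((k : ℝ) + 1))) * X ^ (k + j + 1)) (n - k)]
  rw [Finset.sum_range_succ (fun j => C (((-1 : ℝ) ^ j * ((n - k).choose j) *
      ((n + k + 1 + j).choose (n - k))) * (((n : ℝ) + 1) ^ 2 - (((k + j : ℕ) : ℝ) + 1) ^ 2)) *
      X ^ (k + j + 1 + 1)) (n - k)]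
  have h0 : (((k : ℝ) + 1) * (k : ℝ) - (k : ℝ) * ((k : ℝ) + 1)) = 0 := by ring
  have hlast : (((n : ℝ) + 1) ^ 2 - (((k + (n - k) : ℕ) : ℝ) + 1) ^ 2) = 0 := by
    rw [show k + (n - k) = n by omega]
    ring
  simp only [h0, hlast, mul_zero, map_zero, zero_mul, add_zero]
  rw [← Finset.sum_add_distrib]
  apply Finset.sum_eq_zero
  intro j hj
  have hjlt : j < n - k := Finset.mem_range.mp hj
  rw [show k + (j + 1) + 1 = k + j + 1 + 1 by omega]
  rw [← add_mul, ← C_add]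
  have hs := ALP_scalar n k j hk hjlt
  have hc : ((-1 : ℝ) ^ (j + 1) * ((n - k).choose (j + 1)) * ((n + k + 1 + (j + 1)).choose (n - k))) *
        ((((k + (j + 1) : ℕ) : ℝ) + 1) * ((k + (j + 1) : ℕ) : ℝ) - (k : ℝ) * ((k : ℝ) + 1)) +
      ((-1 : ℝ) ^ j * ((n - k).choose j) * ((n + k + 1 + j).choose (n - k))) *
        (((n : ℝ) + 1) ^ 2 - (((k + j : ℕ) : ℝ) + 1) ^ 2) = 0 := by
    push_cast at hs ⊢
    linear_combination hs
  rw [hc, map_zero, zero_mul]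
end

section
/- For natural numbers n, k, l with n ≤ k, n ≤ l and k ≠ l, the auxiliary polynomials satisfy the orthogonality relation ∫₀¹ P_{n,k}(x) · P_{n,l}(x) dx = 0. -/
open Polynomial

/-- The auxiliary polynomial P_{n,k}(x) = x^n * Jacobi P^{(2n,0)}_{k-n}(1-2x). -/
noncomputable def AuxP (n k : ℕ) : Polynomial ℝ :=
  Polynomial.X ^ n *
    ∑ s ∈ Finset.range (k - n + 1),
      Polynomial.C (((k + n).choose (k - n - s) : ℝ) * ((k - n).choose s : ℝ)) *
        (-Polynomial.X) ^ s * (1 - Polynomial.X) ^ (k - n - s)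

private lemma integral_deriv_poly (p : ℝ[X]) :
    ∫ x in (0:ℝ)..1, (derivative p).eval x = p.eval 1 - p.eval 0 := by
  apply intervalIntegral.integral_eq_sub_of_hasDerivAt (f := fun x => p.eval x)
  · intro x _; exact p.hasDerivAt x
  · exact (derivative p).continuous_aeval.intervalIntegrable _ _

private lemma poly_intInt (p : ℝ[X]) :
    IntervalIntegrable (fun x => p.eval x) MeasureTheory.volume 0 1 :=
  p.continuous_aeval.intervalIntegrable _ _

private lemma ibp (p q : ℝ[X]) (h0 : q.eval 0 = 0) (h1 : q.eval 1 = 0) :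
    ∫ x in (0:ℝ)..1, (p * derivative q).eval x
      = - ∫ x in (0:ℝ)..1, (derivative p * q).eval x := by
  have key := integral_deriv_poly (p * q)
  rw [derivative_mul] at key
  have h2 : ∫ x in (0:ℝ)..1, (derivative p * q + p * derivative q).eval x
      = (∫ x in (0:ℝ)..1, (derivative p * q).eval x)
        + ∫ x in (0:ℝ)..1, (p * derivative q).eval x := by
    simp only [eval_add]
    exact intervalIntegral.integral_add (poly_intInt _) (poly_intInt _)
  rw [h2] at key
  simp only [eval_mul, h0, h1, mul_zero] at key
  simp only [eval_mul]
  linarith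

private lemma ibp_iter (m : ℕ) : ∀ f : ℝ[X],
    (∀ i < m, (derivative^[i] f).eval 0 = 0 ∧ (derivative^[i] f).eval 1 = 0) →
    ∀ p : ℝ[X], ∫ x in (0:ℝ)..1, (p * derivative^[m] f).eval x
      = (-1:ℝ)^m * ∫ x in (0:ℝ)..1, (derivative^[m] p * f).eval x := by
  induction m with
  | zero => intro f _ p; simp
  | succ m ih =>
    intro f hf p
    have hf' : ∀ i < m, (derivative^[i] (derivative f)).eval 0 = 0 ∧
        (derivative^[i] (derivative f)).eval 1 = 0 := by
      intro i hi
      have := hf (i + 1) (by omega)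
      rwa [Function.iterate_succ_apply] at this
    rw [Function.iterate_succ_apply, ih (derivative f) hf' p]
    have h0 := hf 0 (Nat.succ_pos m)
    simp only [Function.iterate_zero, id] at h0
    rw [ibp (derivative^[m] p) f h0.1 h0.2]
    rw [← Function.iterate_succ_apply' derivative m p]
    ring

private lemma vanish (N M i : ℕ) (hiM : i < M) (hiN : i < N) :
    (derivative^[i] ((X:ℝ[X])^N * (X - C 1)^M)).eval 0 = 0 ∧
    (derivative^[i] ((X:ℝ[X])^N * (X - C 1)^M)).eval 1 = 0 := by
  rw [iterate_derivative_mul]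
  refine ⟨?_, ?_⟩ <;>
    (rw [eval_finset_sum]; apply Finset.sum_eq_zero; intro j hj;
     simp only [Finset.mem_range] at hj;
     rw [iterate_derivative_X_pow_eq_smul, iterate_derivative_X_sub_pow];
     simp only [smul_eq_C_mul, nsmul_eq_mul, eval_mul, eval_pow, eval_sub, eval_X, eval_C,
       eval_natCast, eval_one])
  · rw [zero_pow (show N - (i - j) ≠ 0 by omega)]; ring
  · rw [sub_self, zero_pow (show M - j ≠ 0 by omega)]; ring

private lemma rodrigues (n k : ℕ) (hk : n ≤ k) :
    derivative^[k - n] ((X : Polynomial ℝ)^(k+n) * (X - C 1)^(k-n))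
      = C ((-1:ℝ)^(k-n) * (k-n).factorial) * (X^n * AuxP n k) := by
  set m := k - n with hm
  unfold AuxP
  rw [iterate_derivative_mul]
  rw [show ((X:ℝ[X])^n * (X^n * ∑ s ∈ Finset.range (k - n + 1),
      C (((k + n).choose (k - n - s) : ℝ) * ((k - n).choose s : ℝ)) *
        (-X) ^ s * (1 - X) ^ (k - n - s))) = ∑ s ∈ Finset.range (m + 1),
      X^n * (X^n * (C (((k + n).choose (m - s) : ℝ) * ((m).choose s : ℝ)) *
        (-X) ^ s * (1 - X) ^ (m - s))) from by rw [Finset.mul_sum, Finset.mul_sum]]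
  rw [Finset.mul_sum]
  apply Finset.sum_congr rfl
  intro j hj
  simp only [Finset.mem_range] at hj
  have hjm : j ≤ m := by omega
  rw [iterate_derivative_X_pow_eq_smul, iterate_derivative_X_sub_pow]
  have he : k + n - (m - j) = 2*n + j := by omega
  rw [he]
  have hsgn : ((-1:ℝ[X])^m * ((-1:ℝ[X])^j * (-1:ℝ[X])^(m-j))) = 1 := by
    rw [← pow_add, show j + (m - j) = m by omega, ← pow_add, ← two_mul, pow_mul]
    norm_num
  have hnat : m.choose j * ((k + n).descFactorial (m - j) * m.descFactorial j)
      = m.factorial * ((k + n).choose (m - j) * m.choose j) := by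
    rw [Nat.descFactorial_eq_factorial_mul_choose]
    have h2 : (m - j).factorial * m.descFactorial j = m.factorial :=
      Nat.factorial_mul_descFactorial hjm
    calc m.choose j * ((m - j).factorial * (k + n).choose (m - j) * m.descFactorial j)
        = ((m-j).factorial * m.descFactorial j) * ((k + n).choose (m - j) * m.choose j) := by ring
      _ = m.factorial * ((k + n).choose (m - j) * m.choose j) := by rw [h2]
  have hc : ((↑(m.choose j) * (↑((k + n).descFactorial (m - j)) * ↑(m.descFactorial j))) : ℝ[X])
      = ((-1)^m * ↑m.factorial) * ((↑((k+n).choose (m-j)) * ↑(m.choose j))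
          * ((-1:ℝ[X])^j * (-1:ℝ[X])^(m-j))) := by
    calc ((↑(m.choose j) * (↑((k + n).descFactorial (m - j)) * ↑(m.descFactorial j))) : ℝ[X])
        = ↑(m.choose j * ((k + n).descFactorial (m - j) * m.descFactorial j)) := by
          push_cast; ring
      _ = ↑(m.factorial * ((k + n).choose (m - j) * m.choose j)) := by rw [hnat]
      _ = ((-1:ℝ[X])^m * ((-1:ℝ[X])^j * (-1:ℝ[X])^(m-j)))
            * (↑m.factorial * (↑((k+n).choose (m-j)) * ↑(m.choose j))) := by
          rw [hsgn, one_mul]; push_cast; ring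
      _ = _ := by ring
  have hneg : (1 - X : ℝ[X]) ^ (m - j) = (-1:ℝ[X])^(m-j) * (X - C 1)^(m-j) := by
    rw [show (1 - X : ℝ[X]) = -(X - C 1) by simp, neg_pow]
  have hnegx : ((-X : ℝ[X])) ^ j = (-1:ℝ[X])^j * X^j := by rw [neg_pow]
  rw [hneg, hnegx]
  simp only [nsmul_eq_mul, Polynomial.smul_eq_C_mul, map_mul, map_pow, map_neg, map_one,
    map_natCast, Nat.cast_smul_eq_nsmul]
  linear_combination (X:ℝ[X])^(2*n+j) * (X - 1 : ℝ[X])^(m-j) * hc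

private lemma auxQ_natDegree (n k : ℕ) :
    (∑ s ∈ Finset.range (k - n + 1),
      Polynomial.C (((k + n).choose (k - n - s) : ℝ) * ((k - n).choose s : ℝ)) *
        (-Polynomial.X) ^ s * (1 - Polynomial.X) ^ (k - n - s)).natDegree ≤ k - n := by
  apply Polynomial.natDegree_sum_le_of_forall_le
  intro s hs
  simp only [Finset.mem_range] at hs
  calc (C (((k + n).choose (k - n - s) : ℝ) * ((k - n).choose s : ℝ)) *
        (-X) ^ s * (1 - X) ^ (k - n - s)).natDegree
      ≤ (C (((k + n).choose (k - n - s) : ℝ) * ((k - n).choose s : ℝ)) *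
        (-X) ^ s).natDegree + ((1 - X : ℝ[X]) ^ (k - n - s)).natDegree :=
        natDegree_mul_le
    _ ≤ ((C (((k + n).choose (k - n - s) : ℝ) * ((k - n).choose s : ℝ))).natDegree
          + ((-X : ℝ[X]) ^ s).natDegree) + ((1 - X : ℝ[X]) ^ (k - n - s)).natDegree := by
        exact Nat.add_le_add_right natDegree_mul_le _
    _ ≤ (0 + s * 1) + (k - n - s) * 1 := by
        gcongr
        · exact le_of_eq (natDegree_C _)
        · exact natDegree_pow_le.trans (by simp [natDegree_neg])
        · exact natDegree_pow_le.trans (by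
            gcongr
            exact (natDegree_sub_le _ _).trans (by simp))
    _ ≤ k - n := by omega

private lemma aux_main (n k l : ℕ) (hk : n ≤ k) (hkl : k < l) :
    ∫ x in (0:ℝ)..1, (AuxP n k).eval x * (AuxP n l).eval x = 0 := by
  have hl : n ≤ l := le_of_lt (lt_of_le_of_lt hk hkl)
  set g : ℝ[X] := ∑ s ∈ Finset.range (k - n + 1),
      Polynomial.C (((k + n).choose (k - n - s) : ℝ) * ((k - n).choose s : ℝ)) *
        (-Polynomial.X) ^ s * (1 - Polynomial.X) ^ (k - n - s) with hg
  have hAk : AuxP n k = X ^ n * g := rfl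
  set c : ℝ := (-1:ℝ)^(l-n) * (l-n).factorial with hcdef
  have hcne : c ≠ 0 := by
    apply mul_ne_zero
    · exact pow_ne_zero _ (by norm_num)
    · exact_mod_cast Nat.factorial_ne_zero _
  set f : ℝ[X] := (X : ℝ[X])^(l+n) * (X - C 1)^(l-n) with hf
  have key : X ^ n * AuxP n l = C c⁻¹ * derivative^[l-n] f := by
    rw [hf, rodrigues n l hl, ← mul_assoc, ← map_mul, inv_mul_cancel₀ hcne, map_one, one_mul]
  have hprod : AuxP n k * AuxP n l = C c⁻¹ * (g * derivative^[l-n] f) := by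
    rw [hAk, mul_comm ((X:ℝ[X])^n) g, mul_assoc, key]; ring
  have hint : ∫ x in (0:ℝ)..1, (AuxP n k).eval x * (AuxP n l).eval x
      = c⁻¹ * ∫ x in (0:ℝ)..1, (g * derivative^[l-n] f).eval x := by
    have hx : ∀ x : ℝ, (AuxP n k).eval x * (AuxP n l).eval x
        = c⁻¹ * (g * derivative^[l-n] f).eval x := by
      intro x
      rw [← eval_mul, hprod, eval_mul, eval_C]
    simp only [hx]
    exact intervalIntegral.integral_const_mul _ _
  rw [hint]
  have hvan : ∀ i < l - n, (derivative^[i] f).eval 0 = 0 ∧ (derivative^[i] f).eval 1 = 0 := by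
    intro i hi
    exact vanish (l+n) (l-n) i hi (by omega)
  rw [ibp_iter (l-n) f hvan g]
  have hz : derivative^[l-n] g = 0 := by
    apply iterate_derivative_eq_zero
    exact lt_of_le_of_lt (auxQ_natDegree n k) (by omega)
  rw [hz]
  simp

/-- Orthogonality of the auxiliary polynomials. -/
theorem AuxP_orthogonal (n k l : ℕ) (hk : n ≤ k) (hl : n ≤ l) (hkl : k ≠ l) :
    ∫ x in (0:ℝ)..1, (AuxP n k).eval x * (AuxP n l).eval x = 0 := by
  rcases lt_or_gt_of_ne hkl with h | h
  · exact aux_main n k l hk h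
  · rw [show (∫ x in (0:ℝ)..1, (AuxP n k).eval x * (AuxP n l).eval x)
        = ∫ x in (0:ℝ)..1, (AuxP n l).eval x * (AuxP n k).eval x from
        intervalIntegral.integral_congr fun x _ => mul_comm _ _]
    exact aux_main n l k hl h
end

section
/- For natural numbers n and k with n ≤ k, the auxiliary polynomial satisfies the normalization ∫₀¹ P_{n,k}(x)² dx = 1/(2k+1). -/
open Polynomial

/-! ### Auxiliary lemmas -/

private lemma poly_ftc (p : Polynomial ℝ) :
    ∫ x in (0:ℝ)..1, (derivative p).eval x = p.eval 1 - p.eval 0 :=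
  intervalIntegral.integral_eq_sub_of_hasDerivAt (fun x _ => p.hasDerivAt x)
    ((p.derivative.continuous_aeval).intervalIntegrable 0 1)

private lemma poly_intble (p : Polynomial ℝ) :
    IntervalIntegrable (fun x => p.eval x) MeasureTheory.volume (0:ℝ) 1 :=
  p.continuous_aeval.intervalIntegrable 0 1

private lemma poly_ibp (p q : Polynomial ℝ) :
    ∫ x in (0:ℝ)..1, (p * derivative q).eval x
      = (p*q).eval 1 - (p*q).eval 0 - ∫ x in (0:ℝ)..1, (derivative p * q).eval x := by
  have h := poly_ftc (p * q)
  rw [derivative_mul] at h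
  simp only [eval_add] at h
  rw [intervalIntegral.integral_add (poly_intble _) (poly_intble _)] at h
  linarith

private lemma poly_ibp_iter : ∀ (m : ℕ) (q : Polynomial ℝ),
    (∀ j < m, (derivative^[j] q).eval 0 = 0) → (∀ j < m, (derivative^[j] q).eval 1 = 0) →
    ∀ p : Polynomial ℝ,
    ∫ x in (0:ℝ)..1, (p * derivative^[m] q).eval x
      = (-1:ℝ)^m * ∫ x in (0:ℝ)..1, (derivative^[m] p * q).eval x := by
  intro m
  induction m with
  | zero => intro q _ _ p; simp
  | succ m ih =>
    intro q h0 h1 p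
    have hq0 : q.eval 0 = 0 := by simpa using h0 0 (Nat.succ_pos m)
    have hq1 : q.eval 1 = 0 := by simpa using h1 0 (Nat.succ_pos m)
    rw [Function.iterate_succ_apply,
      ih (derivative q)
        (fun j hj => by rw [← Function.iterate_succ_apply]; exact h0 _ (by omega))
        (fun j hj => by rw [← Function.iterate_succ_apply]; exact h1 _ (by omega)) p,
      poly_ibp (derivative^[m] p) q]
    rw [eval_mul, eval_mul, hq0, hq1, mul_zero, mul_zero,
      show derivative ((⇑derivative)^[m] p) = (⇑derivative)^[m+1] p from
        (Function.iterate_succ_apply' _ _ _).symm]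
    ring

private lemma eval_iterate_derivative_root (c : ℝ) (b j : ℕ) (hj : j < b) (p : Polynomial ℝ) :
    (derivative^[j] ((X - C c) ^ b * p)).eval c = 0 := by
  rw [iterate_derivative_mul, eval_finset_sum]
  refine Finset.sum_eq_zero fun i hi => ?_
  have hb : b - (j - i) ≠ 0 := by
    simp only [Finset.mem_range] at hi; omega
  rw [iterate_derivative_X_sub_pow]
  simp [eval_smul, zero_pow hb]

private lemma iterate_derivative_one_sub_pow (b j : ℕ) :
    derivative^[j] ((1 - X : Polynomial ℝ) ^ b)
      = C ((-1:ℝ)^j * (b.descFactorial j : ℝ)) * (1 - X) ^ (b - j) := by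
  by_cases hj : j ≤ b
  · have h1 : ((1:Polynomial ℝ) - X) = C (-1 : ℝ) * (X - C 1) := by
      rw [C_neg, C_1]; ring
    have hpow : ((-1:ℝ))^j * (-1)^(b-j) = (-1)^b := by
      rw [← pow_add]; congr 1; omega
    rw [h1, mul_pow, ← map_pow, iterate_derivative_C_mul, iterate_derivative_X_sub_pow,
      nsmul_eq_mul, ← C_eq_natCast, mul_pow, ← map_pow, ← mul_assoc, ← C_mul, ← mul_assoc,
      ← C_mul]
    congr 2
    rw [← hpow]; ring
  · have hd : ((1 - X : Polynomial ℝ) ^ b).natDegree < j := by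
      have h1 : ((1 - X : Polynomial ℝ)).natDegree ≤ 1 :=
        (natDegree_sub_le _ _).trans (by simp)
      have h2 := natDegree_pow_le (p := (1 - X : Polynomial ℝ)) (n := b)
      have h3 : b * ((1 - X : Polynomial ℝ)).natDegree ≤ b * 1 := Nat.mul_le_mul_left b h1
      omega
    rw [iterate_derivative_eq_zero hd, Nat.descFactorial_eq_zero_iff_lt.2 (by omega)]
    simp

private lemma beta_nat : ∀ (b a : ℕ), ∫ x in (0:ℝ)..1, x^a * (1-x)^b
    = (a.factorial : ℝ) * b.factorial / (a+b+1).factorial := by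
  intro b
  induction b with
  | zero =>
    intro a
    simp only [pow_zero, mul_one, integral_pow, one_pow, Nat.factorial_zero, Nat.cast_one,
      Nat.add_zero]
    rw [zero_pow (by omega), Nat.factorial_succ]
    have : (a.factorial : ℝ) ≠ 0 := by positivity
    push_cast
    field_simp
    norm_num
  | succ b ih =>
    intro a
    have hF : ∀ x ∈ Set.uIcc (0:ℝ) 1, HasDerivAt (fun y : ℝ => y^(a+1) * (1-y)^(b+1))
        ((↑(a+1)*x^a) * (1-x)^(b+1) + x^(a+1) * (↑(b+1)*(1-x)^b * (-1))) x := by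
      intro x _
      have h1 : HasDerivAt (fun y : ℝ => y^(a+1)) (↑(a+1)*x^a) x := by
        simpa using hasDerivAt_pow (a+1) x
      have hs : HasDerivAt (fun y : ℝ => 1 - y) (-1) x := by
        simpa using (hasDerivAt_id x).const_sub 1
      have h2 : HasDerivAt (fun y : ℝ => (1-y)^(b+1)) (↑(b+1)*(1-x)^b * (-1)) x := by
        exact ((hasDerivAt_pow (b+1) ((1:ℝ)-x)).comp x hs).congr_deriv (by simp)
      exact h1.mul h2
    have ftc := intervalIntegral.integral_eq_sub_of_hasDerivAt hF
      ((by fun_prop : Continuous fun x : ℝ =>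
        (↑(a+1)*x^a) * (1-x)^(b+1) + x^(a+1) * (↑(b+1)*(1-x)^b * (-1))).intervalIntegrable 0 1)
    rw [intervalIntegral.integral_congr (g := fun x : ℝ =>
        ((a:ℝ)+1) * (x^a * (1-x)^(b+1)) - ((b:ℝ)+1) * (x^(a+1) * (1-x)^b))
        (fun x _ => by push_cast; ring)] at ftc
    rw [intervalIntegral.integral_sub
        (((by fun_prop : Continuous fun x : ℝ =>
          ((a:ℝ)+1) * (x^a * (1-x)^(b+1)))).intervalIntegrable 0 1)
        (((by fun_prop : Continuous fun x : ℝ =>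
          ((b:ℝ)+1) * (x^(a+1) * (1-x)^b))).intervalIntegrable 0 1),
      intervalIntegral.integral_const_mul, intervalIntegral.integral_const_mul, ih (a+1)] at ftc
    have hend : (1:ℝ)^(a+1) * (1-1)^(b+1) - (0:ℝ)^(a+1) * (1-0)^(b+1) = 0 := by
      rw [zero_pow (by omega)]; norm_num
    rw [hend] at ftc
    have ha : ((a:ℝ)+1) ≠ 0 := by positivity
    have hfac : ∀ c : ℕ, (c.factorial : ℝ) ≠ 0 := fun c => by positivity
    have h2 : a + 1 + b + 1 = a + b + 2 := by omega
    have h3 : a + (b+1) + 1 = a + b + 2 := by omega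
    rw [h2] at ftc
    rw [h3]
    rw [show (b+1).factorial = (b+1) * b.factorial from Nat.factorial_succ b]
    rw [show (a+b+2).factorial = (a+b+2) * (a+b+1).factorial from Nat.factorial_succ _] at ftc ⊢
    rw [show (a+1).factorial = (a+1) * a.factorial from Nat.factorial_succ _] at ftc
    have h4 := hfac (a+b+1)
    field_simp at ftc ⊢
    push_cast at ftc ⊢; exact mul_left_cancel₀ ha (by linear_combination ftc)

private noncomputable def auxS (n m : ℕ) : Polynomial ℝ :=
  ∑ s ∈ Finset.range (m + 1),
    C (((2*n+m).choose (m-s) : ℝ) * ((m).choose s : ℝ)) * (-X)^s * (1-X)^(m-s)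

private lemma negX_pow (i : ℕ) : ((-X : Polynomial ℝ))^i = C ((-1:ℝ)^i) * X^i := by
  rw [map_pow, C_neg, C_1, neg_pow]

private lemma keyE (n m : ℕ) :
    derivative^[m] ((X : Polynomial ℝ)^(2*n+m) * (1-X)^m)
      = C (m.factorial : ℝ) * ((X:Polynomial ℝ)^(2*n) * auxS n m) := by
  rw [iterate_derivative_mul]
  unfold auxS
  rw [Finset.mul_sum, Finset.mul_sum]
  refine Finset.sum_congr rfl fun i hi => ?_
  have hi' : i ≤ m := by simpa [Nat.lt_succ_iff] using hi
  have hc : (m.choose i : ℝ) * (((2*n+m).descFactorial (m-i) : ℝ)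
        * ((-1:ℝ)^i * (m.descFactorial i : ℝ)))
      = (m.factorial : ℝ) * ((((2*n+m).choose (m-i) : ℝ)) * ((m.choose i : ℝ)) * (-1:ℝ)^i) := by
    have h1 : ((2*n+m).descFactorial (m-i) : ℝ)
        = ((m-i).factorial : ℝ) * (((2*n+m).choose (m-i) : ℝ)) := by
      exact_mod_cast congrArg (Nat.cast : ℕ → ℝ) (Nat.descFactorial_eq_factorial_mul_choose _ _)
    have h2 : (m.descFactorial i : ℝ) = (i.factorial : ℝ) * ((m.choose i : ℝ)) := by
      exact_mod_cast congrArg (Nat.cast : ℕ → ℝ) (Nat.descFactorial_eq_factorial_mul_choose _ _)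
    have h3 : (m.choose i : ℝ) * (i.factorial : ℝ) * ((m-i).factorial : ℝ)
        = (m.factorial : ℝ) := by
      exact_mod_cast congrArg (Nat.cast : ℕ → ℝ) (Nat.choose_mul_factorial_mul_factorial hi')
    rw [h1, h2, ← h3]; ring
  have hC := congrArg C hc
  simp only [C_mul] at hC
  rw [iterate_derivative_X_pow_eq_C_mul, iterate_derivative_one_sub_pow,
    show 2*n+m - (m-i) = 2*n+i from by omega, negX_pow, nsmul_eq_mul, ← C_eq_natCast,
    pow_add]
  simp only [C_mul]
  linear_combination ((X:Polynomial ℝ)^(2*n) * X^i * (1-X)^(m-i)) * hC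

private lemma keyF (n m : ℕ) :
    derivative^[m] (auxS n m)
      = C ((-1:ℝ)^m * (m.factorial : ℝ) * (((2*n+2*m).choose m : ℝ))) := by
  unfold auxS
  rw [iterate_derivative_sum]
  have step : ∀ s ∈ Finset.range (m+1),
      derivative^[m] (C (((2*n+m).choose (m-s) : ℝ) * ((m).choose s : ℝ))
          * (-X)^s * (1-X)^(m-s))
      = C ((((2*n+m).choose (m-s) : ℝ) * ((m).choose s : ℝ))
          * ((-1:ℝ)^m * (m.factorial : ℝ))) := by
    intro s hs
    have hs' : s ≤ m := by simpa [Nat.lt_succ_iff] using hs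
    rw [negX_pow, show C (((2*n+m).choose (m-s) : ℝ) * ((m).choose s : ℝ))
          * (C ((-1:ℝ)^s) * X^s) * (1-X)^(m-s)
        = C ((((2*n+m).choose (m-s) : ℝ) * ((m).choose s : ℝ)) * (-1:ℝ)^s)
          * (X^s * (1-X)^(m-s)) from by
      simp only [C_mul]; ring]
    rw [iterate_derivative_C_mul, iterate_derivative_mul]
    rw [Finset.sum_eq_single (m-s)]
    · rw [iterate_derivative_X_pow_eq_C_mul, iterate_derivative_one_sub_pow,
        show m - (m - s) = s from by omega, Nat.sub_self, Nat.sub_self, pow_zero, pow_zero,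
        Nat.descFactorial_self, Nat.descFactorial_self, nsmul_eq_mul, ← C_eq_natCast]
      have hsign : ((-1:ℝ))^s * (-1)^(m-s) = (-1)^m := by
        rw [← pow_add]; congr 1; omega
      have hfac : (m.choose (m-s) : ℝ) * (s.factorial : ℝ) * ((m-s).factorial : ℝ)
          = (m.factorial : ℝ) := by
        have h := Nat.choose_mul_factorial_mul_factorial (Nat.sub_le m s)
        rw [show m - (m - s) = s from by omega] at h
        have := congrArg (Nat.cast : ℕ → ℝ) h
        push_cast at this
        linarith [this]
      have hC := congrArg C hfac
      have hS := congrArg C hsign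
      simp only [C_mul] at hC hS ⊢
      linear_combination (C (((2*n+m).choose (m-s):ℝ)) * C ((m.choose s:ℝ))) *
          (C ((-1:ℝ)^s) * C ((-1:ℝ)^(m-s))) * hC +
        (C (((2*n+m).choose (m-s):ℝ)) * C ((m.choose s:ℝ))) * C ((m.factorial:ℝ)) * hS
    · intro i hi hne
      rcases Nat.lt_or_ge i (m - s) with h | h
      · rw [iterate_derivative_X_pow_eq_C_mul,
          Nat.descFactorial_eq_zero_iff_lt.2 (show s < m - i from by omega)]
        simp
      · rw [iterate_derivative_one_sub_pow,
          Nat.descFactorial_eq_zero_iff_lt.2 (show m - s < i from by omega)]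
        simp
    · intro h
      exact absurd (Finset.mem_range.2 (by omega)) h
  rw [Finset.sum_congr rfl step, ← map_sum, ← Finset.sum_mul]
  congr 1
  have hvan : ∑ s ∈ Finset.range (m+1), (2*n+m).choose (m-s) * m.choose s
      = (2*n+2*m).choose m := by
    rw [show 2*n+2*m = m + (2*n+m) from by omega, Nat.add_choose_eq,
      Finset.Nat.sum_antidiagonal_eq_sum_range_succ
        (fun x y => m.choose x * (2*n+m).choose y) m]
    exact Finset.sum_congr rfl fun s _ => mul_comm _ _
  have hv := congrArg (Nat.cast : ℕ → ℝ) hvan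
  push_cast at hv
  rw [hv]; ring

/-- Normalization of the auxiliary polynomials. -/
theorem AuxP_norm (n k : ℕ) (hk : n ≤ k) :
    ∫ x in (0:ℝ)..1, (AuxP n k).eval x ^ 2 = 1 / (2 * (k : ℝ) + 1) := by
  obtain ⟨m, rfl⟩ : ∃ m, k = n + m := ⟨k - n, by omega⟩
  set Q : Polynomial ℝ := (X : Polynomial ℝ)^(2*n+m) * (1-X)^m with hQ
  have h1 : AuxP n (n+m) = X^n * auxS n m := by
    unfold AuxP auxS
    simp only [show n+m-n = m from by omega, show n+m+n = 2*n+m from by omega]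
  have hb0 : ∀ j < m, (derivative^[j] Q).eval 0 = 0 := by
    intro j hj
    have h := eval_iterate_derivative_root 0 (2*n+m) j (by omega) ((1-X)^m)
    simpa [hQ] using h
  have hb1 : ∀ j < m, (derivative^[j] Q).eval 1 = 0 := by
    intro j hj
    have h := eval_iterate_derivative_root 1 m j hj (C ((-1:ℝ)^m) * X^(2*n+m))
    have hEq : ((X: Polynomial ℝ) - C 1)^m * (C ((-1:ℝ)^m) * X^(2*n+m)) = Q := by
      rw [hQ, show ((1:Polynomial ℝ) - X) = C (-1:ℝ) * (X - C 1) from by rw [C_neg, C_1]; ring,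
        mul_pow, ← map_pow]
      ring
    rw [hEq] at h
    exact h
  have key : (m.factorial : ℝ) * ∫ x in (0:ℝ)..1, (AuxP n (n+m)).eval x ^ 2
      = ∫ x in (0:ℝ)..1, (auxS n m * derivative^[m] Q).eval x := by
    rw [← intervalIntegral.integral_const_mul]
    refine intervalIntegral.integral_congr fun x _ => ?_
    rw [hQ, keyE, h1]
    simp only [eval_mul, eval_pow, eval_C, eval_X]
    ring
  rw [poly_ibp_iter m Q hb0 hb1 (auxS n m), keyF] at key
  have key2 : ∫ x in (0:ℝ)..1, (C ((-1:ℝ)^m * (m.factorial : ℝ)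
        * (((2*n+2*m).choose m : ℝ))) * Q).eval x
      = ((-1:ℝ)^m * (m.factorial : ℝ) * (((2*n+2*m).choose m : ℝ)))
        * (((2*n+m).factorial : ℝ) * (m.factorial : ℝ) / ((2*n+m+m+1).factorial : ℝ)) := by
    simp only [eval_mul, eval_C]
    rw [intervalIntegral.integral_const_mul]
    congr 1
    rw [← beta_nat m (2*n+m)]
    refine intervalIntegral.integral_congr fun x _ => ?_
    simp [hQ]
  rw [key2] at key
  have hch : ((2*n+2*m).choose m : ℝ) * (m.factorial : ℝ) * ((2*n+m).factorial : ℝ)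
      = ((2*n+2*m).factorial : ℝ) := by
    have h := Nat.choose_mul_factorial_mul_factorial (show m ≤ 2*n+2*m from by omega)
    rw [show 2*n+2*m - m = 2*n+m from by omega] at h
    exact_mod_cast congrArg (Nat.cast : ℕ → ℝ) h
  have hfs : ((2*n+m+m+1).factorial : ℝ) = (2*((n:ℝ)+m)+1) * ((2*n+2*m).factorial : ℝ) := by
    rw [show 2*n+m+m+1 = (2*n+2*m)+1 from by omega, Nat.factorial_succ]
    push_cast
    ring
  rw [hfs] at key
  have hm : (m.factorial : ℝ) ≠ 0 := by positivity
  have hf2 : ((2*n+2*m).factorial : ℝ) ≠ 0 := by positivity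
  have hden : (2*((n:ℝ)+m)+1) ≠ 0 := by positivity
  have hsq : ((-1:ℝ))^m * (-1)^m = 1 := by
    rw [← pow_add, Even.neg_one_pow ⟨m, rfl⟩]
  have hR : (-1:ℝ)^m * ((-1)^m * (m.factorial : ℝ) * (((2*n+2*m).choose m : ℝ))
        * (((2*n+m).factorial : ℝ) * (m.factorial : ℝ)
          / ((2*((n:ℝ)+m)+1) * ((2*n+2*m).factorial : ℝ))))
      = (m.factorial : ℝ) * (1/(2*((n:ℝ)+m)+1)) := by
    calc (-1:ℝ)^m * ((-1)^m * (m.factorial : ℝ) * (((2*n+2*m).choose m : ℝ))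
        * (((2*n+m).factorial : ℝ) * (m.factorial : ℝ)
          / ((2*((n:ℝ)+m)+1) * ((2*n+2*m).factorial : ℝ))))
        = ((-1:ℝ)^m * (-1)^m) * (((((2*n+2*m).choose m : ℝ)) * (m.factorial : ℝ)
            * ((2*n+m).factorial : ℝ)) * (m.factorial : ℝ)
          / ((2*((n:ℝ)+m)+1) * ((2*n+2*m).factorial : ℝ))) := by ring
      _ = 1 * (((2*n+2*m).factorial : ℝ) * (m.factorial : ℝ)
          / ((2*((n:ℝ)+m)+1) * ((2*n+2*m).factorial : ℝ))) := by rw [hsq, hch]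
      _ = (m.factorial : ℝ) * (1/(2*((n:ℝ)+m)+1)) := by
          rw [one_mul]; field_simp
  rw [hR] at key
  have := mul_left_cancel₀ hm key
  push_cast
  rw [this]
end

section
/- Let n, k be natural numbers with n ≤ k, let x ∈ (0,1) be real, and let r > 0. Then the auxiliary polynomial admits the contour integral representation P_{n,k}(x) = (1/(2πi)) · x^{−n} · ∮_{|z−x|=r} z^{k+n} (1−z)^{k−n} / (z−x)^{k−n+1} dz, where the integral is taken over the circle of radius r centered at x in the complex plane. -/
open Polynomial

open Finset Metric in
lemma circleIntegral_finset_sum {ι : Type*} (s : Finset ι) (f : ι → ℂ → ℂ) (c : ℂ) (R : ℝ)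
    (h : ∀ i ∈ s, CircleIntegrable (f i) c R) :
    (∮ z in C(c, R), ∑ i ∈ s, f i z) = ∑ i ∈ s, ∮ z in C(c, R), f i z := by
  simp only [circleIntegral, Finset.smul_sum]
  exact intervalIntegral.integral_finset_sum fun i hi => (h i hi).out

open Finset Metric Complex in
/-- Contour integral representation of the auxiliary polynomials. -/
theorem AuxP_contour_integral (n k : ℕ) (hnk : n ≤ k) (x : ℝ)
    (hx : x ∈ Set.Ioo (0:ℝ) 1) (r : ℝ) (hr : 0 < r) :
    (((AuxP n k).eval x : ℝ) : ℂ) =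
      (1 / (2 * Real.pi * Complex.I)) * ((x : ℂ) ^ n)⁻¹ *
        ∮ z in C((x : ℂ), r),
          z ^ (k + n) * (1 - z) ^ (k - n) / (z - (x : ℂ)) ^ (k - n + 1) := by
  obtain ⟨hx0, hx1⟩ := hx
  have hxC : (x:ℂ) ≠ 0 := by exact_mod_cast hx0.ne'
  set m := k - n with hm
  set K := k + n with hK
  have hmK : m ≤ K := le_trans (Nat.sub_le k n) (Nat.le_add_right k n)
  set c : ℕ → ℕ → ℂ := fun t s =>
    (K.choose t : ℂ) * (x:ℂ)^(K - t) * ((m.choose s : ℂ) * (-1)^s * ((1:ℂ) - x)^(m - s))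
    with hc
  have hsub : ∀ z ∈ sphere (x:ℂ) r, z - (x:ℂ) ≠ 0 := by
    intro z hz
    rw [mem_sphere_iff_norm] at hz
    intro h0
    rw [h0] at hz
    simp at hz
    exact hr.ne hz
  -- Step 1: rewrite the integrand as a finite sum of powers of (z - x)
  have step1 : (∮ z in C((x:ℂ), r), z ^ K * (1 - z) ^ m / (z - (x:ℂ)) ^ (m+1))
      = ∮ z in C((x:ℂ), r), ∑ p ∈ range (K+1) ×ˢ range (m+1),
          c p.1 p.2 * (z - (x:ℂ)) ^ ((p.1 : ℤ) + p.2 - (m+1)) := by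
    refine circleIntegral.integral_congr hr.le fun z hz => ?_
    have hz0 : z - (x:ℂ) ≠ 0 := hsub z hz
    have h1 : z ^ K = ∑ t ∈ range (K+1), (z - (x:ℂ))^t * (x:ℂ)^(K-t) * (K.choose t : ℂ) := by
      conv_lhs => rw [show z = (z - (x:ℂ)) + (x:ℂ) by ring]
      exact add_pow _ _ _
    have h2 : (1 - z) ^ m
        = ∑ s ∈ range (m+1), (-(z - (x:ℂ)))^s * ((1:ℂ)-(x:ℂ))^(m-s) * (m.choose s : ℂ) := by
      conv_lhs => rw [show (1:ℂ) - z = (-(z - (x:ℂ))) + ((1:ℂ) - (x:ℂ)) by ring]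
      exact add_pow _ _ _
    rw [h1, h2, Finset.sum_mul_sum, Finset.sum_product]
    rw [Finset.sum_div]
    refine Finset.sum_congr rfl fun t _ => ?_
    rw [Finset.sum_div]
    refine Finset.sum_congr rfl fun s _ => ?_
    have hzp : (z - (x:ℂ)) ^ ((t : ℤ) + s - (m+1))
        = (z - (x:ℂ)) ^ (t + s) / (z - (x:ℂ)) ^ (m+1) := by
      rw [show ((t:ℤ) + s - (m+1)) = ((t + s : ℕ) : ℤ) - ((m+1 : ℕ) : ℤ) by push_cast; ring,
        zpow_sub₀ hz0, zpow_natCast, zpow_natCast]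
    rw [hzp, hc]
    simp only
    rw [neg_pow]
    field_simp
    ring
  -- Integrability of each term
  have hint : ∀ p ∈ range (K+1) ×ˢ range (m+1),
      CircleIntegrable (fun z => c p.1 p.2 * (z - (x:ℂ)) ^ ((p.1:ℤ) + p.2 - (m+1))) (x:ℂ) r := by
    intro p _
    apply ContinuousOn.circleIntegrable hr.le
    refine continuousOn_const.mul ?_
    exact ((continuous_id.sub continuous_const).continuousOn).zpow₀ _
      fun z hz => Or.inl (hsub z hz)
  -- Step 2: value of each elementary integral
  have hval : ∀ p ∈ range (K+1) ×ˢ range (m+1),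
      (∮ z in C((x:ℂ), r), c p.1 p.2 * (z - (x:ℂ)) ^ ((p.1:ℤ) + p.2 - (m+1)))
        = if p.1 + p.2 = m then c p.1 p.2 * (2 * Real.pi * Complex.I) else 0 := by
    intro p _
    rw [circleIntegral.integral_const_mul]
    by_cases h : p.1 + p.2 = m
    · rw [if_pos h]
      have he : ((p.1:ℤ) + p.2 - (m+1)) = -1 := by omega
      rw [he]
      simp only [zpow_neg_one]
      rw [circleIntegral.integral_sub_center_inv _ hr.ne']
    · rw [if_neg h, circleIntegral.integral_sub_zpow_of_ne (by omega), mul_zero]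
  -- Assemble the integral value
  have hintval : (∮ z in C((x:ℂ), r), z ^ K * (1 - z) ^ m / (z - (x:ℂ)) ^ (m+1))
      = (∑ s ∈ range (m+1), c (m - s) s) * (2 * Real.pi * Complex.I) := by
    rw [step1, circleIntegral_finset_sum _ _ _ _ hint, Finset.sum_congr rfl hval,
      Finset.sum_product]
    have hin : ∀ t ∈ range (K+1),
        (∑ s ∈ range (m+1),
            if t + s = m then c t s * (2 * Real.pi * Complex.I) else 0)
        = if t ≤ m then c t (m - t) * (2 * Real.pi * Complex.I) else 0 := by
      intro t _
      by_cases ht : t ≤ m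
      · rw [if_pos ht, Finset.sum_eq_single (m - t)]
        · rw [if_pos (by omega)]
        · intro s _ hne; rw [if_neg (by omega)]
        · intro habs; exact absurd (Finset.mem_range.2 (by omega)) habs
      · rw [if_neg ht]
        exact Finset.sum_eq_zero fun s _ => if_neg (by omega)
    rw [Finset.sum_congr rfl hin,
      ← Finset.sum_subset (Finset.range_subset_range.2 (by omega) :
        range (m+1) ⊆ range (K+1)) (fun t _ hts => if_neg (by
          simp only [Finset.mem_range] at hts; omega))]
    rw [Finset.sum_congr rfl (fun t ht => if_pos (by
      simp only [Finset.mem_range] at ht; omega)), ← Finset.sum_mul]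
    congr 1
    calc ∑ t ∈ range (m+1), c t (m - t)
        = ∑ s ∈ range (m+1), c (m + 1 - 1 - s) (m - (m + 1 - 1 - s)) :=
          (Finset.sum_range_reflect (fun t => c t (m - t)) (m+1)).symm
      _ = ∑ s ∈ range (m+1), c (m - s) s := by
          refine Finset.sum_congr rfl fun s hs => ?_
          simp only [Finset.mem_range] at hs
          congr 1 <;> omega
  -- Rewrite the summand
  have hterm : ∀ s ∈ range (m+1), c (m - s) s
      = (x:ℂ)^n * (x:ℂ)^n *
        ((K.choose (m - s) : ℂ) * (m.choose s : ℂ) * (-(x:ℂ))^s * ((1:ℂ) - x)^(m - s)) := by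
    intro s hs
    simp only [Finset.mem_range] at hs
    rw [hc]
    simp only
    have h1 : K - (m - s) = n + n + s := by omega
    have h2 : m - (m - s) = s := by omega
    rw [h1, pow_add, pow_add, neg_pow]
    ring
  -- Evaluate AuxP
  have hL : (((AuxP n k).eval x : ℝ) : ℂ)
      = (x:ℂ)^n * ∑ s ∈ range (m+1),
          (K.choose (m - s) : ℂ) * (m.choose s : ℂ) * (-(x:ℂ))^s * ((1:ℂ) - x)^(m - s) := by
    simp only [AuxP, eval_mul, eval_pow, eval_X, eval_finset_sum, eval_C, eval_neg,
      eval_sub, eval_one, ← hm, ← hK]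
    push_cast
    ring_nf
  rw [hL, hintval, Finset.sum_congr rfl hterm, ← Finset.mul_sum]
  have h2pi : (2 * (Real.pi:ℂ) * Complex.I) ≠ 0 := by
    simp [Real.pi_ne_zero, Complex.I_ne_zero]
  have hxn : ((x:ℂ)^n) ≠ 0 := pow_ne_zero _ hxC
  field_simp
end

section
/- Let n and k be natural numbers with 1 ≤ k ≤ n. Suppose x_k, x_{k+1}, …, x_n are n−k+1 pairwise distinct real numbers in the open interval (0,1), each of which is a root of the alternative Legendre polynomial 𝒫_{n,k−1}, and define the weights w_j = 1 / ( Σ_{l=k}^{n} (2l+1) · 𝒫_{n,l}(x_j)² ) for j = k, …, n. Then the alternative Gauss quadrature formula Σ_{j=k}^{n} w_j · x_j^{m} = 1/(m+1) = ∫₀¹ x^m dx holds exactly for every integer m with 2k−1 ≤ m ≤ 2n. -/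
open Polynomial

open Finset

noncomputable def Phi (p : Polynomial ℝ) : ℝ := ∫ t in (0:ℝ)..1, p.eval t

lemma Phi_sum {ι : Type*} (u : Finset ι) (f : ι → Polynomial ℝ) :
    Phi (∑ i ∈ u, f i) = ∑ i ∈ u, Phi (f i) := by
  unfold Phi
  rw [← intervalIntegral.integral_finset_sum]
  · simp [eval_finset_sum]
  · exact fun i _ => ((f i).continuous_aeval).intervalIntegrable _ _

lemma Phi_C_mul (c : ℝ) (p : Polynomial ℝ) : Phi (C c * p) = c * Phi p := by
  unfold Phi
  simp [intervalIntegral.integral_const_mul]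

lemma Phi_X_pow (d : ℕ) : Phi (X ^ d) = 1 / ((d : ℝ) + 1) := by
  unfold Phi
  simp [integral_pow]

lemma Phi_C_mul_X_pow (c : ℝ) (d : ℕ) : Phi (C c * X ^ d) = c / ((d : ℝ) + 1) := by
  rw [Phi_C_mul, Phi_X_pow]; ring

/-- Finite differences kill polynomials of degree < M. -/
lemma fd_sum (M : ℕ) (q : Polynomial ℝ) (h : q.natDegree < M) :
    ∑ j ∈ range (M + 1), (-1 : ℝ) ^ j * (M.choose j) * q.eval (j : ℝ) = 0 := by
  induction M generalizing q with
  | zero => omega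
  | succ M ih =>
    set Δq : Polynomial ℝ := q.comp (X + 1) - q with hΔdef
    have hΔeval : ∀ i : ℕ, Δq.eval (i : ℝ) = q.eval ((i+1 : ℕ) : ℝ) - q.eval (i : ℝ) := by
      intro i; push_cast; simp [hΔdef, eval_comp]
    have hrec : ∑ j ∈ range (M + 1 + 1), (-1 : ℝ) ^ j * ((M+1).choose j) * q.eval (j : ℝ)
        = - ∑ j ∈ range (M + 1), (-1 : ℝ) ^ j * (M.choose j) * Δq.eval (j : ℝ) := by
      rw [Finset.sum_range_succ' (fun j => (-1 : ℝ) ^ j * ((M+1).choose j) * q.eval (j : ℝ))]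
      have hsplit : ∀ i : ℕ, (-1 : ℝ) ^ (i+1) * (((M+1).choose (i+1) : ℕ) : ℝ) * q.eval ((i+1 : ℕ) : ℝ)
          = -((-1 : ℝ) ^ i * ((M.choose i : ℕ) : ℝ) * q.eval ((i+1 : ℕ) : ℝ))
            + (-1 : ℝ)^(i+1) * ((M.choose (i+1) : ℕ) : ℝ) * q.eval ((i+1 : ℕ) : ℝ) := by
        intro i
        rw [Nat.choose_succ_succ]
        push_cast
        ring
      rw [Finset.sum_congr rfl (fun i _ => hsplit i), Finset.sum_add_distrib]
      have h2 : ∑ i ∈ range (M+1), (-1 : ℝ)^(i+1) * ((M.choose (i+1) : ℕ) : ℝ) * q.eval ((i+1 : ℕ) : ℝ)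
          = (∑ j ∈ range (M+1), (-1 : ℝ)^j * (M.choose j) * q.eval (j : ℝ)) - q.eval 0 := by
        have h4 := Finset.sum_range_succ' (fun j => (-1 : ℝ) ^ j * (M.choose j) * q.eval (j : ℝ)) (M+1)
        have h3 : ∑ j ∈ range (M+1+1), (-1 : ℝ)^j * (M.choose j) * q.eval (j : ℝ)
            = ∑ j ∈ range (M+1), (-1 : ℝ)^j * (M.choose j) * q.eval (j : ℝ) := by
          rw [Finset.sum_range_succ]
          simp [Nat.choose_succ_self]
        rw [h3] at h4
        simp only [Nat.choose_zero_right, Nat.cast_one, pow_zero, one_mul, Nat.cast_zero] at h4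
        linarith [h4]
      rw [h2]
      have h5 : ∀ j ∈ range (M+1), (-1:ℝ)^j * (M.choose j) * Δq.eval (j : ℝ)
          = (-1:ℝ)^j * (M.choose j) * q.eval ((j+1 : ℕ) : ℝ) - (-1:ℝ)^j * (M.choose j) * q.eval (j : ℝ) := by
        intro j _; rw [hΔeval j]; ring
      rw [Finset.sum_congr rfl h5, Finset.sum_sub_distrib]
      push_cast
      simp only [Nat.choose_zero_right, Nat.cast_one, one_mul, Finset.sum_neg_distrib]
      ring
    rw [hrec]
    by_cases hΔ0 : Δq = 0
    · simp [hΔ0]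
    · have hd1 : (X + 1 : Polynomial ℝ).natDegree = 1 := by
        simpa using natDegree_X_add_C (1:ℝ)
      have hq0 : q.natDegree ≠ 0 := by
        intro h0
        obtain ⟨c, rfl⟩ := natDegree_eq_zero.mp h0
        simp [hΔdef] at hΔ0
      have hqne : q ≠ 0 := fun h0 => hq0 (by simp [h0])
      have hcompne : q.comp (X + 1) ≠ 0 := by
        intro h0
        apply hqne
        apply Polynomial.zero_of_eval_zero
        intro y
        have h7 := congrArg (eval (y - 1)) h0
        simpa [eval_comp] using h7
      have hdeq : (q.comp (X + 1)).degree = q.degree := by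
        rw [degree_eq_natDegree hcompne, degree_eq_natDegree hqne, natDegree_comp, hd1]
        simp
      have hdlt : Δq.degree < q.degree := by
        have h9 := degree_sub_lt hdeq hcompne ?_
        · rw [hΔdef]; rwa [hdeq] at h9
        · rw [leadingCoeff_comp (by rw [hd1]; omega)]
          have hm1 : (X + 1 : Polynomial ℝ).Monic := by
            simpa using monic_X_add_C (1:ℝ)
          rw [hm1.leadingCoeff]
          simp
      have h8 : Δq.natDegree < q.natDegree := natDegree_lt_natDegree hΔ0 hdlt
      rw [ih Δq (by omega)]
      simp

lemma pascal_rec (M : ℕ) (u : ℕ → ℝ) :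
    ∑ j ∈ range (M+2), (-1:ℝ)^j * ((M+1).choose j) * u j
      = ∑ j ∈ range (M+1), (-1:ℝ)^j * (M.choose j) * u j
        - ∑ j ∈ range (M+1), (-1:ℝ)^j * (M.choose j) * u (j+1) := by
  rw [Finset.sum_range_succ' (fun j => (-1 : ℝ) ^ j * ((M+1).choose j) * u j)]
  have hsplit : ∀ i : ℕ, (-1 : ℝ) ^ (i+1) * (((M+1).choose (i+1) : ℕ) : ℝ) * u (i+1)
      = -((-1 : ℝ) ^ i * ((M.choose i : ℕ) : ℝ) * u (i+1))
        + (-1 : ℝ)^(i+1) * ((M.choose (i+1) : ℕ) : ℝ) * u (i+1) := by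
    intro i
    rw [Nat.choose_succ_succ]
    push_cast
    ring
  rw [Finset.sum_congr rfl (fun i _ => hsplit i), Finset.sum_add_distrib]
  have h2 : ∑ i ∈ range (M+1), (-1 : ℝ)^(i+1) * ((M.choose (i+1) : ℕ) : ℝ) * u (i+1)
      = (∑ j ∈ range (M+1), (-1 : ℝ)^j * (M.choose j) * u j) - u 0 := by
    have h4 := Finset.sum_range_succ' (fun j => (-1 : ℝ) ^ j * (M.choose j) * u j) (M+1)
    have h3 : ∑ j ∈ range (M+1+1), (-1 : ℝ)^j * (M.choose j) * u j
        = ∑ j ∈ range (M+1), (-1 : ℝ)^j * (M.choose j) * u j := by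
      rw [Finset.sum_range_succ]
      simp [Nat.choose_succ_self]
    rw [h3] at h4
    simp only [Nat.choose_zero_right, Nat.cast_one, pow_zero, one_mul, Nat.cast_zero] at h4
    linarith [h4]
  rw [h2]
  simp only [Nat.choose_zero_right, Nat.cast_one, one_mul, Finset.sum_neg_distrib]
  ring

lemma sum_inv_choose (M : ℕ) : ∀ (b : ℝ), (∀ i ∈ range (M+1), b + i ≠ 0) →
    ∑ j ∈ range (M+1), (-1:ℝ)^j * (M.choose j) / (b + j)
      = (M.factorial : ℝ) / ∏ i ∈ range (M+1), (b + i) := by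
  induction M with
  | zero => intro b hb; simpa using by norm_num
  | succ M ih =>
    intro b hb
    have hM1 : b + (M+1 : ℕ) ≠ 0 := hb (M+1) (by simp)
    have hb1 : ∀ i ∈ range (M+1), b + i ≠ 0 := fun i hi => hb i (by simp at hi ⊢; omega)
    have hb2 : ∀ i ∈ range (M+1), (b+1) + i ≠ 0 := by
      intro i hi
      have h := hb (i+1) (by simp at hi ⊢; omega)
      push_cast at h ⊢
      intro h0
      exact h (by linarith)
    have hrec := pascal_rec M (fun j => 1 / (b + j))
    have hL : ∑ j ∈ range (M+2), (-1:ℝ)^j * ((M+1).choose j) / (b + j)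
        = ∑ j ∈ range (M+2), (-1:ℝ)^j * ((M+1).choose j) * (1 / (b + j)) := by
      apply Finset.sum_congr rfl; intro j _; ring
    have hA : ∑ j ∈ range (M+1), (-1:ℝ)^j * (M.choose j) * (1 / (b + j))
        = (M.factorial : ℝ) / ∏ i ∈ range (M+1), (b + i) := by
      rw [← ih b hb1]
      apply Finset.sum_congr rfl; intro j _; ring
    have hB : ∑ j ∈ range (M+1), (-1:ℝ)^j * (M.choose j) * (1 / (b + (j+1 : ℕ)))
        = (M.factorial : ℝ) / ∏ i ∈ range (M+1), ((b+1) + i) := by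
      rw [← ih (b+1) hb2]
      apply Finset.sum_congr rfl; intro j _
      push_cast
      ring_nf
    set P1 : ℝ := ∏ i ∈ range (M+1), (b + i) with hP1def
    set P2 : ℝ := ∏ i ∈ range (M+1), ((b+1) + i) with hP2def
    have hP1 : P1 ≠ 0 := Finset.prod_ne_zero_iff.mpr hb1
    have hP2 : P2 ≠ 0 := Finset.prod_ne_zero_iff.mpr hb2
    have e1 : ∏ i ∈ range (M+2), (b + i) = P1 * (b + (M+1 : ℕ)) := by
      rw [Finset.prod_range_succ]
    have e2 : ∏ i ∈ range (M+2), (b + i) = b * P2 := by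
      rw [Finset.prod_range_succ' (fun i => b + ((i:ℕ) : ℝ)) (M+1)]
      have hc : ∀ i ∈ range (M+1), b + ((i+1:ℕ):ℝ) = (b+1) + i := by
        intro i _; push_cast; ring
      rw [Finset.prod_congr rfl hc, hP2def]
      push_cast
      ring
    have hrel : P1 * (b + (M+1 : ℕ)) = b * P2 := by rw [← e1, e2]
    rw [hL, hrec]
    have hB' : ∑ j ∈ range (M+1), (-1:ℝ)^j * (M.choose j) * (1 / (b + ((j:ℕ)+1))) 
        = (M.factorial : ℝ) / P2 := by
      rw [← hB]
      apply Finset.sum_congr rfl; intro j _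
      push_cast
      ring_nf
    rw [hA]
    rw [show (∑ j ∈ range (M+1), (-1:ℝ)^j * (M.choose j) * (fun j => 1 / (b + (j:ℕ))) (j+1))
        = (M.factorial : ℝ) / P2 from by rw [← hB']; apply Finset.sum_congr rfl; intro j _; push_cast; ring_nf]
    rw [e1, div_sub_div _ _ hP1 hP2, div_eq_div_iff (by exact mul_ne_zero hP1 hP2) (mul_ne_zero hP1 hM1)]
    push_cast [Nat.factorial_succ]
    linear_combination (norm := (push_cast; ring1)) (-(M.factorial:ℝ) * P1) * hrel

lemma cast_prod_sub (m M : ℕ) :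
    ∏ i ∈ range M, ((m:ℝ) - i) = ((m.descFactorial M : ℕ) : ℝ) := by
  by_cases h : M ≤ m
  · rw [Nat.descFactorial_eq_prod_range, Nat.cast_prod]
    apply Finset.prod_congr rfl
    intro i hi
    simp only [mem_range] at hi
    have : i ≤ m := by omega
    push_cast [this]
    ring
  · rw [Nat.descFactorial_eq_zero_iff_lt.mpr (by omega)]
    simp only [Nat.cast_zero]
    apply Finset.prod_eq_zero (i := m) (by simp [mem_range]; omega)
    simp

lemma key_sum_s15 (M a : ℕ) (b : ℝ) (hb : ∀ i ∈ range (M+1), b + i ≠ 0) :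
    ∑ j ∈ range (M+1), (-1:ℝ)^j * (M.choose j) * ((a+j).choose M) / (b + j)
      = (∏ i ∈ range M, ((a:ℝ) - b - i)) / ∏ i ∈ range (M+1), (b + i) := by
  rcases Nat.eq_zero_or_pos M with hM0 | hM
  · subst hM0
    simp
  set p : Polynomial ℝ := C ((M.factorial:ℝ)⁻¹) * ∏ i ∈ range M, (X + C ((a:ℝ) - i)) with hpdef
  have hfacne : ((M.factorial : ℕ) : ℝ) ≠ 0 := by
    exact_mod_cast Nat.factorial_ne_zero M
  have peval_nat : ∀ j : ℕ, p.eval (j:ℝ) = (((a+j).choose M : ℕ) : ℝ) := by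
    intro j
    rw [hpdef]
    simp only [eval_mul, eval_C, eval_prod, eval_add, eval_X]
    have h1 : ∏ i ∈ range M, ((j:ℝ) + ((a:ℝ) - i)) = ∏ i ∈ range M, (((a+j:ℕ):ℝ) - i) := by
      apply Finset.prod_congr rfl; intro i _; push_cast; ring
    rw [h1, cast_prod_sub, Nat.descFactorial_eq_factorial_mul_choose]
    push_cast
    field_simp
  have peval_negb : p.eval (-b) = ((M.factorial:ℝ))⁻¹ * ∏ i ∈ range M, ((a:ℝ) - b - i) := by
    rw [hpdef]
    simp only [eval_mul, eval_C, eval_prod, eval_add, eval_X]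
    congr 1
    apply Finset.prod_congr rfl; intro i _; ring
  have hdegp : p.natDegree ≤ M := by
    rw [hpdef]
    refine le_trans (natDegree_mul_le) ?_
    rw [natDegree_C]
    refine le_trans (le_of_eq (zero_add _)) ?_
    refine le_trans (natDegree_prod_le _ _) ?_
    have hs : ∀ i ∈ range M, (X + C ((a:ℝ) - i)).natDegree ≤ 1 :=
      fun i _ => le_of_eq (natDegree_X_add_C _)
    refine le_trans (Finset.sum_le_sum hs) (by simp)
  obtain ⟨q, hq⟩ : ∃ q, p - C (p.eval (-b)) = (X - C (-b)) * q := by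
    have : IsRoot (p - C (p.eval (-b))) (-b) := by simp [IsRoot]
    exact (dvd_iff_isRoot.mpr this)
  have hqdeg : q.natDegree < M := by
    by_cases hq0 : q = 0
    · rw [hq0]; simpa using hM
    · have h1 : ((X - C (-b)) * q).natDegree = 1 + q.natDegree := by
        rw [natDegree_mul (X_sub_C_ne_zero (-b)) hq0, natDegree_X_sub_C]
      have h2 : (p - C (p.eval (-b))).natDegree ≤ M := by
        refine le_trans (natDegree_sub_le _ _) ?_
        simp [hdegp]
      rw [hq] at h2
      omega
  have hterm : ∀ j ∈ range (M+1),
      (-1:ℝ)^j * (M.choose j) * ((a+j).choose M) / (b + j)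
        = p.eval (-b) * ((-1:ℝ)^j * (M.choose j) / (b + j))
          + (-1:ℝ)^j * (M.choose j) * q.eval (j:ℝ) := by
    intro j hj
    have hbj := hb j hj
    have hpj : p.eval (j:ℝ) = p.eval (-b) + ((j:ℝ) + b) * q.eval (j:ℝ) := by
      have := congrArg (eval (j:ℝ)) hq
      simp only [eval_sub, eval_mul, eval_C, eval_X, sub_neg_eq_add] at this
      linarith [this]
    rw [← peval_nat j, hpj]
    field_simp
    ring
  rw [Finset.sum_congr rfl hterm, Finset.sum_add_distrib, ← Finset.mul_sum,
    sum_inv_choose M b hb, fd_sum M q hqdeg, peval_negb]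
  field_simp
  simp

lemma Phi_ALP_mul_X_pow (n κ t : ℕ) :
    Phi (ALP n κ * X ^ t)
      = (∏ i ∈ range (n-κ), ((n:ℝ) - t - i)) / ∏ i ∈ range (n-κ+1), ((κ:ℝ) + t + 1 + i) := by
  set M := n - κ with hM
  have hexp : ALP n κ * X ^ t
      = ∑ j ∈ range (M+1),
          C ((-1 : ℝ) ^ j * (M.choose j) * ((n + κ + 1 + j).choose M)) * X ^ (κ + j + t) := by
    rw [ALP, Finset.sum_mul]
    apply Finset.sum_congr rfl
    intro j _
    rw [mul_assoc, ← pow_add]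
  rw [hexp, Phi_sum]
  have hterm : ∀ j ∈ range (M+1),
      Phi (C ((-1 : ℝ) ^ j * (M.choose j) * ((n + κ + 1 + j).choose M)) * X ^ (κ + j + t))
        = (-1:ℝ)^j * (M.choose j) * (((n+κ+1)+j).choose M) / (((κ:ℝ) + t + 1) + j) := by
    intro j _
    rw [Phi_C_mul_X_pow]
    have e1 : ((κ + j + t : ℕ) : ℝ) + 1 = ((κ:ℝ) + t + 1) + j := by push_cast; ring
    have e2 : n + κ + 1 + j = (n + κ + 1) + j := by omega
    rw [e1, e2]
  rw [Finset.sum_congr rfl hterm]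
  have hb : ∀ i ∈ range (M+1), ((κ:ℝ) + t + 1) + i ≠ 0 := by
    intro i _
    positivity
  rw [key_sum_s15 M (n+κ+1) ((κ:ℝ)+t+1) hb]
  congr 1
  apply Finset.prod_congr rfl
  intro i _
  push_cast
  ring

lemma Phi_ALP_X_zero (n κ t : ℕ) (h1 : κ < t) (h2 : t ≤ n) : Phi (ALP n κ * X ^ t) = 0 := by
  rw [Phi_ALP_mul_X_pow n κ t]
  have hmem : n - t ∈ range (n - κ) := by simp [mem_range]; omega
  rw [Finset.prod_eq_zero hmem (by push_cast [Nat.cast_sub h2]; ring), zero_div]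

lemma prod_range_factorial (s M : ℕ) : s.factorial * ∏ i ∈ range M, (s+1+i) = (s+M).factorial := by
  induction M with
  | zero => simp
  | succ M ih =>
    rw [Finset.prod_range_succ, ← mul_assoc, ih, show s + (M+1) = (s+M) + 1 from rfl,
      Nat.factorial_succ]
    ring

lemma Phi_ALP_expand (n l l' : ℕ) :
    Phi (ALP n l * ALP n l')
      = ∑ j ∈ range (n-l'+1),
          ((-1:ℝ)^j * ((n-l').choose j) * ((n+l'+1+j).choose (n-l'))) *
            Phi (ALP n l * X ^ (l'+j)) := by
  have h1 : ALP n l * ALP n l'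
      = ∑ j ∈ range (n-l'+1),
          C ((-1:ℝ)^j * ((n-l').choose j) * ((n+l'+1+j).choose (n-l'))) *
            (ALP n l * X ^ (l'+j)) := by
    conv_lhs => rw [show ALP n l' = ∑ j ∈ Finset.range (n - l' + 1),
      C ((-1 : ℝ) ^ j * ((n - l').choose j) * ((n + l' + 1 + j).choose (n - l'))) *
        X ^ (l' + j) from rfl]
    rw [Finset.mul_sum]
    apply Finset.sum_congr rfl
    intro j _
    ring
  rw [h1, Phi_sum]
  apply Finset.sum_congr rfl
  intro j _
  rw [Phi_C_mul]

lemma Phi_ALP_offdiag (n l l' : ℕ) (h : l < l') (h2 : l' ≤ n) :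
    Phi (ALP n l * ALP n l') = 0 := by
  rw [Phi_ALP_expand]
  apply Finset.sum_eq_zero
  intro j hj
  simp only [mem_range] at hj
  rw [Phi_ALP_X_zero n l (l'+j) (by omega) (by omega), mul_zero]

lemma Phi_ALP_diag (n l : ℕ) (hl : l ≤ n) :
    Phi (ALP n l * ALP n l) = 1 / (2*(l:ℝ)+1) := by
  rw [Phi_ALP_expand]
  rw [Finset.sum_eq_single_of_mem 0 (by simp)]
  · simp only [pow_zero, Nat.choose_zero_right, Nat.cast_one, mul_one, one_mul, add_zero]
    rw [Phi_ALP_mul_X_pow n l l]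
    set M := n - l with hM
    have hnum : ∏ i ∈ range M, ((n:ℝ) - l - i) = (M.factorial : ℝ) := by
      have h1 : ∀ i ∈ range M, (n:ℝ) - l - i = ((M:ℕ):ℝ) - i := by
        intro i _
        push_cast [Nat.cast_sub hl, hM]
        ring
      rw [Finset.prod_congr rfl h1, cast_prod_sub M M, Nat.descFactorial_self]
    have hden : ∏ i ∈ range (M+1), ((l:ℝ) + l + 1 + i) = ((n+l+1).factorial : ℝ) / ((2*l).factorial : ℝ) := by
      have h2 : ∀ i ∈ range (M+1), ((l:ℝ) + l + 1 + i) = (((2*l+1+i : ℕ)):ℝ) := by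
        intro i _; push_cast; ring
      rw [Finset.prod_congr rfl h2, ← Nat.cast_prod]
      have h3 := prod_range_factorial (2*l) (M+1)
      have h4 : ∀ i ∈ range (M+1), 2*l+1+i = 2*l+1+i := fun _ _ => rfl
      have h5 : 2*l + (M+1) = n+l+1 := by omega
      rw [h5] at h3
      have hfne : ((2*l).factorial : ℝ) ≠ 0 := by exact_mod_cast Nat.factorial_ne_zero _
      field_simp
      rw [mul_comm]
      exact_mod_cast congrArg (fun z : ℕ => (z:ℝ)) h3
    rw [hnum, hden]
    have hc := Nat.choose_mul_factorial_mul_factorial (show M ≤ n+l+1 by omega)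
    have h6 : n + l + 1 - M = 2*l+1 := by omega
    rw [h6] at hc
    have c1 : ((n+l+0+1).choose M : ℝ) = ((n+l+1).choose M : ℝ) := by norm_num
    rw [c1]
    have hfM : ((M.factorial : ℕ) : ℝ) ≠ 0 := by exact_mod_cast Nat.factorial_ne_zero _
    have hf2l : (((2*l).factorial : ℕ) : ℝ) ≠ 0 := by exact_mod_cast Nat.factorial_ne_zero _
    have hf2l1 : (((2*l+1).factorial : ℕ) : ℝ) ≠ 0 := by exact_mod_cast Nat.factorial_ne_zero _
    have hfnl : (((n+l+1).factorial : ℕ) : ℝ) ≠ 0 := by exact_mod_cast Nat.factorial_ne_zero _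
    have hcR : ((n+l+1).choose M : ℝ) * (M.factorial : ℝ) * ((2*l+1).factorial : ℝ)
        = ((n+l+1).factorial : ℝ) := by exact_mod_cast congrArg (fun z : ℕ => (z:ℝ)) hc
    have hstep : ((2*l+1).factorial : ℝ) = (2*(l:ℝ)+1) * ((2*l).factorial : ℝ) := by
      rw [Nat.factorial_succ]
      push_cast
      ring
    have h2l1 : (2*(l:ℝ)+1) ≠ 0 := by positivity
    rw [hstep] at hcR
    field_simp
    linear_combination hcR
  · intro j hj hjne
    rw [Phi_ALP_X_zero n l (l+j) (by omega) (by simp [mem_range] at hj; omega), mul_zero]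

lemma Phi_add (p q : Polynomial ℝ) : Phi (p + q) = Phi p + Phi q := by
  unfold Phi
  simp only [eval_add]
  exact intervalIntegral.integral_add ((p.continuous).intervalIntegrable _ _)
    ((q.continuous).intervalIntegrable _ _)

lemma quad_exact (n k : ℕ) (hk : 1 ≤ k) (hkn : k ≤ n) (x : ℕ → ℝ)
    (hmem : ∀ j ∈ Finset.Icc k n, x j ∈ Set.Ioo (0:ℝ) 1)
    (hdist : ∀ j ∈ Finset.Icc k n, ∀ j' ∈ Finset.Icc k n, j ≠ j' → x j ≠ x j')
    (hroot : ∀ j ∈ Finset.Icc k n, (ALP n (k - 1)).eval (x j) = 0) :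
    ∃ W : ℕ → ℝ, ∀ m : ℕ, 2*k-1 ≤ m → m ≤ 2*n →
      ∑ j ∈ Finset.Icc k n, W j * x j ^ m = 1/((m:ℝ)+1) := by
  classical
  set s := Finset.Icc k n with hs
  set N := n - k + 1 with hN
  have hcard : s.card = N := by rw [hs, Nat.card_Icc]; omega
  have hx0 : ∀ j ∈ s, x j ≠ 0 := fun j hj => ne_of_gt (hmem j hj).1
  have hinj : Set.InjOn x s := by
    intro j hj j' hj' he
    by_contra hne
    exact hdist j (by simpa using hj) j' (by simpa using hj') hne he
  set Q : Polynomial ℝ := ∏ j ∈ s, (X - C (x j)) with hQ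
  have hQmonic : Q.Monic := monic_prod_of_monic _ _ (fun j _ => monic_X_sub_C _)
  have hQdeg : Q.natDegree = N := by
    rw [hQ, natDegree_prod _ _ (fun j _ => X_sub_C_ne_zero (x j))]
    simp [natDegree_X_sub_C, hcard]
  have hQeval : ∀ j ∈ s, Q.eval (x j) = 0 := by
    intro j hj
    rw [hQ, eval_prod]
    exact Finset.prod_eq_zero hj (by simp)
  set N' := n - (k-1) with hN'
  have hN'N : N' = N := by omega
  set c : ℕ → ℝ := fun j => (-1:ℝ)^j * ((N'.choose j) : ℝ) * (((n+(k-1)+1+j).choose N') : ℝ)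
    with hc
  set R : Polynomial ℝ := ∑ j ∈ range (N'+1), C (c j) * X ^ j with hR
  have hPR : ALP n (k-1) = X^(k-1) * R := by
    rw [ALP, hR, Finset.mul_sum]
    apply Finset.sum_congr rfl
    intro j _
    rw [hc, pow_add]
    ring
  have hReval : ∀ j ∈ s, R.eval (x j) = 0 := by
    intro j hj
    have h1 := hroot j hj
    rw [hPR, eval_mul, eval_pow, eval_X] at h1
    rcases mul_eq_zero.mp h1 with h2 | h2
    · exact absurd h2 (pow_ne_zero _ (hx0 j hj))
    · exact h2
  set lc : ℝ := c N' with hlc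
  have hlcne : lc ≠ 0 := by
    rw [hlc, hc]
    simp only [Nat.choose_self, Nat.cast_one, mul_one]
    apply mul_ne_zero
    · exact pow_ne_zero _ (by norm_num)
    · exact_mod_cast Nat.pos_iff_ne_zero.mp (Nat.choose_pos (by omega))
  have hRQ : R = C lc * Q := by
    have hD0 : R - C lc * Q = 0 := by
      set D := R - C lc * Q with hD
      have hDdeg : D.natDegree < N := by
        have h1 : R = (∑ j ∈ range N', C (c j) * X ^ j) + C lc * X ^ N' := by
          rw [hR, Finset.sum_range_succ, hlc]
        have h2 : D = (∑ j ∈ range N', C (c j) * X ^ j) - C lc * (Q - X ^ N') := by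
          rw [hD, h1]
          ring
        have h3 : (∑ j ∈ range N', C (c j) * X ^ j).natDegree ≤ N - 1 := by
          apply Polynomial.natDegree_sum_le_of_forall_le
          intro j hj
          simp only [mem_range] at hj
          refine le_trans (natDegree_C_mul_le _ _) ?_
          rw [natDegree_X_pow]
          omega
        have h4 : (Q - X ^ N').natDegree ≤ N - 1 := by
          by_cases h0 : Q - X ^ N' = 0
          · rw [h0]; simp
          · have h5 : (Q - X ^ N').degree < (N : WithBot ℕ) := by
              have := degree_sub_lt (p := Q) (q := X ^ N') ?_ hQmonic.ne_zero ?_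
              · rwa [degree_eq_natDegree hQmonic.ne_zero, hQdeg] at this
              · rw [degree_eq_natDegree hQmonic.ne_zero, degree_X_pow, hQdeg, hN'N]
              · rw [hQmonic.leadingCoeff, leadingCoeff_X_pow]
            have h6 : (Q - X ^ N').natDegree < N :=
              (natDegree_lt_iff_degree_lt h0).mpr h5
            omega
        rw [h2]
        refine lt_of_le_of_lt (natDegree_sub_le _ _) ?_
        have h7 : (C lc * (Q - X ^ N')).natDegree ≤ N - 1 :=
          le_trans (natDegree_C_mul_le _ _) h4
        have hN1 : 1 ≤ N := by omega
        omega
      have hDeval : ∀ y ∈ s.image x, D.eval y = 0 := by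
        intro y hy
        obtain ⟨j, hj, rfl⟩ := Finset.mem_image.mp hy
        rw [hD]
        simp [hReval j hj, hQeval j hj]
      apply Polynomial.eq_zero_of_natDegree_lt_card_of_eval_eq_zero' D (s.image x) hDeval
      rwa [Finset.card_image_of_injOn hinj, hcard]
    exact sub_eq_zero.mp hD0
  have hPQ : ALP n (k-1) = C lc * (X^(k-1) * Q) := by
    rw [hPR, hRQ]; ring
  refine ⟨fun j => Phi (X^(2*k-1) * Lagrange.basis s x j) / (x j)^(2*k-1), ?_⟩
  intro m hm1 hm2
  set g : Polynomial ℝ := X ^ (m - (2*k-1)) with hg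
  set r : Polynomial ℝ := g %ₘ Q with hr
  set sq : Polynomial ℝ := g /ₘ Q with hsq
  have hdiv : g = r + Q * sq := (modByMonic_add_div g Q).symm
  have hsqdeg : sq.natDegree ≤ n - k := by
    rw [hsq, natDegree_divByMonic g hQmonic, hg, natDegree_X_pow, hQdeg]
    omega
  have hrdeg : r.degree < (N : WithBot ℕ) := by
    have := degree_modByMonic_lt g hQmonic
    rwa [degree_eq_natDegree hQmonic.ne_zero, hQdeg] at this
  have hsplit : (1:ℝ)/((m:ℝ)+1) = Phi (X^(2*k-1) * r) + Phi (X^(2*k-1) * (Q * sq)) := by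
    rw [← Phi_add, ← mul_add, ← hdiv]
    have hXm : (X : Polynomial ℝ)^(2*k-1) * g = X ^ m := by
      rw [hg, ← pow_add]
      congr 1
      omega
    rw [hXm, Phi_X_pow]
  have hterm1 : Phi (X^(2*k-1) * (Q * sq)) = 0 := by
    have hCC : C lc⁻¹ * C lc = (1 : Polynomial ℝ) := by
      rw [← C_mul, inv_mul_cancel₀ hlcne, C_1]
    have hXX : (X : Polynomial ℝ)^(k-1) * X^k = X^(2*k-1) := by
      rw [← pow_add]
      congr 1
      omega
    have h1 : X^(2*k-1) * (Q * sq) = C lc⁻¹ * (ALP n (k-1) * (X^k * sq)) := by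
      rw [hPQ, show C lc⁻¹ * (C lc * (X^(k-1) * Q) * (X^k * sq))
        = (C lc⁻¹ * C lc) * ((X^(k-1) * X^k) * (Q * sq)) from by ring, hCC, hXX, one_mul]
    rw [h1, Phi_C_mul]
    have h2 : ALP n (k-1) * (X^k * sq)
        = ∑ d ∈ range (sq.natDegree + 1), C (sq.coeff d) * (ALP n (k-1) * X^(k+d)) := by
      conv_lhs => rw [Polynomial.as_sum_range' sq (sq.natDegree + 1) (Nat.lt_succ_self _)]
      rw [Finset.mul_sum, Finset.mul_sum]
      apply Finset.sum_congr rfl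
      intro d _
      rw [← Polynomial.C_mul_X_pow_eq_monomial, pow_add]
      ring
    rw [h2, Phi_sum]
    have h3 : ∀ d ∈ range (sq.natDegree + 1),
        Phi (C (sq.coeff d) * (ALP n (k-1) * X^(k+d))) = 0 := by
      intro d hd
      simp only [mem_range] at hd
      rw [Phi_C_mul, Phi_ALP_X_zero n (k-1) (k+d) (by omega) (by omega), mul_zero]
    rw [Finset.sum_congr rfl h3, Finset.sum_const_zero, mul_zero]
  have hrinterp : r = ∑ j ∈ s, C (r.eval (x j)) * Lagrange.basis s x j := by
    have h1 := Lagrange.eq_interpolate hinj (by rw [hcard]; exact hrdeg)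
    conv_lhs => rw [h1, Lagrange.interpolate_apply]
  have hrx : ∀ j ∈ s, r.eval (x j) = (x j)^(m - (2*k-1)) := by
    intro j hj
    have h1 := congrArg (eval (x j)) hdiv
    rw [hg] at h1
    simp only [eval_pow, eval_X, eval_add, eval_mul] at h1
    rw [hQeval j hj] at h1
    simp at h1
    linarith [h1]
  have hterm2 : Phi (X^(2*k-1) * r)
      = ∑ j ∈ s, (x j)^(m - (2*k-1)) * Phi (X^(2*k-1) * Lagrange.basis s x j) := by
    conv_lhs => rw [hrinterp]
    rw [Finset.mul_sum, Phi_sum]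
    apply Finset.sum_congr rfl
    intro j hj
    rw [show (X:Polynomial ℝ)^(2*k-1) * (C (r.eval (x j)) * Lagrange.basis s x j)
      = C (r.eval (x j)) * (X^(2*k-1) * Lagrange.basis s x j) from by ring, Phi_C_mul,
      hrx j hj]
  have hfinal : ∀ j ∈ s,
      Phi (X^(2*k-1) * Lagrange.basis s x j) / (x j)^(2*k-1) * x j ^ m
        = (x j)^(m - (2*k-1)) * Phi (X^(2*k-1) * Lagrange.basis s x j) := by
    intro j hj
    have h1 : (x j) ^ m = (x j)^(2*k-1) * (x j)^(m - (2*k-1)) := by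
      rw [← pow_add]
      congr 1
      omega
    have h2 : (x j)^(2*k-1) ≠ 0 := pow_ne_zero _ (hx0 j hj)
    rw [h1, div_mul_eq_mul_div, div_eq_iff h2]
    ring
  rw [Finset.sum_congr rfl hfinal, ← hterm2, hsplit, hterm1, add_zero]

lemma ALP_eval_expand (n l : ℕ) (y : ℝ) :
    (ALP n l).eval y = ∑ a ∈ range (n-l+1),
      ((-1:ℝ)^a * (((n-l).choose a):ℝ) * (((n+l+1+a).choose (n-l)):ℝ)) * y^(l+a) := by
  rw [ALP, eval_finset_sum]
  apply Finset.sum_congr rfl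
  intro a _
  simp [eval_mul, eval_pow]

lemma Phi_ALP_X_sum (n l t : ℕ) :
    Phi (ALP n l * X ^ t) = ∑ a ∈ range (n-l+1),
      ((-1:ℝ)^a * (((n-l).choose a):ℝ) * (((n+l+1+a).choose (n-l)):ℝ)) / (((l+a+t : ℕ):ℝ)+1) := by
  have hexp : ALP n l * X ^ t
      = ∑ a ∈ range (n-l+1),
          C ((-1 : ℝ)^a * (((n-l).choose a):ℝ) * (((n+l+1+a).choose (n-l)):ℝ)) * X ^ (l+a+t) := by
    rw [ALP, Finset.sum_mul]
    apply Finset.sum_congr rfl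
    intro a _
    rw [mul_assoc, ← pow_add]
  rw [hexp, Phi_sum]
  apply Finset.sum_congr rfl
  intro a _
  rw [Phi_C_mul_X_pow]

lemma sum_W_ALP (n k : ℕ) (hk : 1 ≤ k) (x W : ℕ → ℝ)
    (hW : ∀ m : ℕ, 2*k-1 ≤ m → m ≤ 2*n →
      ∑ j ∈ Finset.Icc k n, W j * x j ^ m = 1/((m:ℝ)+1))
    (l l' : ℕ) (hl : l ∈ Finset.Icc k n) (hl' : l' ∈ Finset.Icc k n) :
    ∑ j ∈ Finset.Icc k n, W j * ((ALP n l).eval (x j) * (ALP n l').eval (x j))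
      = Phi (ALP n l * ALP n l') := by
  simp only [Finset.mem_Icc] at hl hl'
  set c : ℕ → ℕ → ℝ :=
    fun l a => (-1:ℝ)^a * (((n-l).choose a):ℝ) * (((n+l+1+a).choose (n-l)):ℝ) with hcdef
  have hLHS : ∑ j ∈ Finset.Icc k n, W j * ((ALP n l).eval (x j) * (ALP n l').eval (x j))
      = ∑ a ∈ range (n-l+1), ∑ b ∈ range (n-l'+1),
          c l a * c l' b * (1/(((l+a+(l'+b) : ℕ):ℝ)+1)) := by
    have h1 : ∀ j ∈ Finset.Icc k n,
        W j * ((ALP n l).eval (x j) * (ALP n l').eval (x j))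
          = ∑ a ∈ range (n-l+1), ∑ b ∈ range (n-l'+1),
              c l a * c l' b * (W j * x j ^ (l+a+(l'+b))) := by
      intro j _
      rw [ALP_eval_expand n l (x j), ALP_eval_expand n l' (x j), Finset.sum_mul_sum]
      rw [Finset.mul_sum]
      apply Finset.sum_congr rfl
      intro a _
      rw [Finset.mul_sum]
      apply Finset.sum_congr rfl
      intro b _
      rw [show l+a+(l'+b) = (l+a) + (l'+b) from rfl, pow_add]
      ring
    rw [Finset.sum_congr rfl h1, Finset.sum_comm]
    apply Finset.sum_congr rfl
    intro a ha
    rw [Finset.sum_comm]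
    apply Finset.sum_congr rfl
    intro b hb
    simp only [mem_range] at ha hb
    rw [← Finset.mul_sum, hW (l+a+(l'+b)) (by omega) (by omega)]
  rw [hLHS]
  have hRHS : Phi (ALP n l * ALP n l')
      = ∑ b ∈ range (n-l'+1), c l' b * Phi (ALP n l * X ^ (l'+b)) := by
    rw [Phi_ALP_expand]
  rw [hRHS]
  rw [Finset.sum_comm]
  apply Finset.sum_congr rfl
  intro b hb
  rw [Phi_ALP_X_sum, Finset.mul_sum]
  apply Finset.sum_congr rfl
  intro a ha
  rw [hcdef]
  have : l+a+(l'+b) = l + a + (l'+b) := rfl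
  field_simp

open Matrix in
lemma weights_id (n k : ℕ) (hk : 1 ≤ k) (hkn : k ≤ n) (x W : ℕ → ℝ)
    (hW : ∀ m : ℕ, 2*k-1 ≤ m → m ≤ 2*n →
      ∑ j ∈ Finset.Icc k n, W j * x j ^ m = 1/((m:ℝ)+1)) :
    ∀ j ∈ Finset.Icc k n,
      W j * (∑ l ∈ Finset.Icc k n, (2*(l:ℝ)+1) * (ALP n l).eval (x j)^2) = 1 := by
  classical
  set s := Finset.Icc k n with hs
  let ι := {a // a ∈ s}
  let B : Matrix ι ι ℝ := fun l j => (ALP n l.val).eval (x j.val)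
  let DW : Matrix ι ι ℝ := Matrix.diagonal (fun j => W j.val)
  let E : Matrix ι ι ℝ := Matrix.diagonal (fun l => 2*(l.val:ℝ)+1)
  let Einv : Matrix ι ι ℝ := Matrix.diagonal (fun l => (2*(l.val:ℝ)+1)⁻¹)
  have h1 : B * DW * Bᵀ = Einv := by
    ext l l'
    have e1 : (B * DW * Bᵀ) l l' = ∑ j : ι, B l j * W j.val * B l' j := by
      rw [Matrix.mul_apply]
      apply Finset.sum_congr rfl
      intro j _
      rw [Matrix.mul_diagonal, Matrix.transpose_apply]
    rw [e1]
    have e2 : ∑ j : ι, B l j * W j.val * B l' j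
        = ∑ j ∈ s, W j * ((ALP n l.val).eval (x j) * (ALP n l'.val).eval (x j)) := by
      rw [← Finset.sum_coe_sort s (fun j => W j * ((ALP n l.val).eval (x j) * (ALP n l'.val).eval (x j)))]
      apply Finset.sum_congr rfl
      intro j _
      show (ALP n l.val).eval (x j.val) * W j.val * (ALP n l'.val).eval (x j.val) = _
      ring
    rw [e2, sum_W_ALP n k hk x W hW l.val l'.val l.prop l'.prop]
    by_cases he : l = l'
    · subst he
      have hll : l.val ≤ n := (Finset.mem_Icc.mp l.prop).2
      rw [Phi_ALP_diag n l.val hll]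
      show _ = Matrix.diagonal (fun l : ι => (2*(l.val:ℝ)+1)⁻¹) l l
      rw [Matrix.diagonal_apply_eq, one_div]
    · have hne : l.val ≠ l'.val := fun hv => he (Subtype.ext hv)
      have hval : Phi (ALP n l.val * ALP n l'.val) = 0 := by
        rcases Nat.lt_or_ge l.val l'.val with hlt | hge
        · exact Phi_ALP_offdiag n l.val l'.val hlt (Finset.mem_Icc.mp l'.prop).2
        · rw [mul_comm]
          exact Phi_ALP_offdiag n l'.val l.val (by omega) (Finset.mem_Icc.mp l.prop).2
      rw [hval]
      show (0:ℝ) = Matrix.diagonal (fun l : ι => (2*(l.val:ℝ)+1)⁻¹) l l'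
      rw [Matrix.diagonal_apply_ne _ he]
  have h2 : B * (DW * Bᵀ * E) = 1 := by
    have ha : B * (DW * Bᵀ * E) = (B * DW * Bᵀ) * E := by
      simp only [Matrix.mul_assoc]
    rw [ha, h1]
    show Matrix.diagonal _ * Matrix.diagonal _ = 1
    rw [Matrix.diagonal_mul_diagonal]
    have : (fun l : ι => (2*(l.val:ℝ)+1)⁻¹ * (2*(l.val:ℝ)+1)) = fun _ => (1:ℝ) :=
      funext fun l => inv_mul_cancel₀ (by positivity)
    rw [this, Matrix.diagonal_one]
  have h3 : (DW * Bᵀ * E) * B = 1 := mul_eq_one_comm.mp h2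
  intro j hj
  set jj : ι := ⟨j, hj⟩ with hjj
  have h4 := congrFun (congrFun h3 jj) jj
  rw [Matrix.one_apply_eq] at h4
  have h5 : ((DW * Bᵀ * E) * B) jj jj
      = W j * ∑ l ∈ s, (2*(l:ℝ)+1) * (ALP n l).eval (x j)^2 := by
    rw [Matrix.mul_apply]
    have e3 : ∀ l : ι, (DW * Bᵀ * E) jj l * B l jj
        = W j * ((2*(l.val:ℝ)+1) * (ALP n l.val).eval (x j)^2) := by
      intro l
      rw [Matrix.mul_diagonal, Matrix.diagonal_mul, Matrix.transpose_apply]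
      show W j * (ALP n l.val).eval (x j) * (2*(l.val:ℝ)+1) * (ALP n l.val).eval (x j) = _
      ring
    rw [Finset.sum_congr rfl (fun l _ => e3 l), ← Finset.mul_sum]
    congr 1
    exact Finset.sum_coe_sort s (fun l => (2*(l:ℝ)+1) * (ALP n l).eval (x j)^2)
  rw [h5] at h4
  exact h4


/-- Alternative Gauss quadrature: if x_k, …, x_n are pairwise distinct roots of
𝒫_{n,k−1} in (0,1) and w_j = 1 / (Σ_{l=k}^n (2l+1) 𝒫_{n,l}(x_j)²), then the
quadrature Σ_j w_j x_j^m = 1/(m+1) = ∫₀¹ x^m dx is exact for 2k−1 ≤ m ≤ 2n. -/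
theorem ALP_gauss_quadrature (n k : ℕ) (hk : 1 ≤ k) (hkn : k ≤ n)
    (x : ℕ → ℝ)
    (hmem : ∀ j ∈ Finset.Icc k n, x j ∈ Set.Ioo (0:ℝ) 1)
    (hdist : ∀ j ∈ Finset.Icc k n, ∀ j' ∈ Finset.Icc k n, j ≠ j' → x j ≠ x j')
    (hroot : ∀ j ∈ Finset.Icc k n, (ALP n (k - 1)).eval (x j) = 0)
    (w : ℕ → ℝ)
    (hw : ∀ j ∈ Finset.Icc k n,
      w j = 1 / ∑ l ∈ Finset.Icc k n, (2 * (l : ℝ) + 1) * (ALP n l).eval (x j) ^ 2)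
    (m : ℕ) (hm1 : 2 * k - 1 ≤ m) (hm2 : m ≤ 2 * n) :
    (∑ j ∈ Finset.Icc k n, w j * x j ^ m) = 1 / ((m : ℝ) + 1) ∧
      (1 : ℝ) / ((m : ℝ) + 1) = ∫ t in (0:ℝ)..1, t ^ m := by
  obtain ⟨W, hW⟩ := quad_exact n k hk hkn x hmem hdist hroot
  have hid := weights_id n k hk hkn x W hW
  constructor
  · have hww : ∀ j ∈ Finset.Icc k n, w j = W j := by
      intro j hj
      have h1 := hid j hj
      set K := ∑ l ∈ Finset.Icc k n, (2*(l:ℝ)+1) * (ALP n l).eval (x j)^2 with hK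
      have hKne : K ≠ 0 := by
        intro h0
        rw [h0, mul_zero] at h1
        norm_num at h1
      rw [hw j hj]
      have h2 : (∑ l ∈ Finset.Icc k n, (2 * (l : ℝ) + 1) * (ALP n l).eval (x j) ^ 2) = K := by
        rw [hK]
      rw [h2, eq_comm, eq_div_iff hKne]
      linarith [h1]
    rw [Finset.sum_congr rfl (fun j hj => by rw [hww j hj])]
    exact hW m hm1 hm2
  · rw [integral_pow]
    norm_num
end
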